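/- arXiv:1708.01421 — 9 statements merged into one kernel-verified Lean document; each statement's English description precedes it below -/
import Mathlib

section
/- Let ψ be a formal power series over ℚ with nonzero constant term, let y(x) = x·ψ(x), and let x(y) be the formal power series with zero constant term that is the compositional inverse of y(x) (i.e., substituting x(y) into y(x) gives the identity series y). Then for every formal power series H over ℚ and every integer n ≥ 1, the coefficient of y^n in the composite series H(x(y)) equals (1/n) times the coefficient of a^{n-1} in ψ(a)^{-n}·H'(a), where H' is the formal derivative of H; moreover the constant coefficient of H(x(y)) equals the constant coefficient of H. -/
open PowerSeries

/-- Formal composition (substitution) `f(a)` of formal power series: substituting `a`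
(which is intended to have zero constant term) into `f`.  Since `a` has zero constant
term, the coefficient of `X^n` in `f(a)` only involves `a^k` for `k ≤ n`. -/
noncomputable def PowerSeries.substitute {R : Type*} [CommRing R] (a f : R⟦X⟧) : R⟦X⟧ :=
  PowerSeries.mk fun n => ∑ k ∈ Finset.range (n + 1),
    PowerSeries.coeff k f * PowerSeries.coeff n (a ^ k)

namespace LagrangeAux

lemma coeff_substitute (a f : ℚ⟦X⟧) (n : ℕ) :
    coeff n (PowerSeries.substitute a f)
      = ∑ k ∈ Finset.range (n + 1), coeff k f * coeff n (a ^ k) :=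
  PowerSeries.coeff_mk _ _

lemma coeff_pow_eq_zero {a : ℚ⟦X⟧} (ha : constantCoeff a = 0) {i j : ℕ} (h : i < j) :
    coeff i (a ^ j) = 0 := by
  have hd : (PowerSeries.X : ℚ⟦X⟧) ^ j ∣ a ^ j :=
    pow_dvd_pow_of_dvd (PowerSeries.X_dvd_iff.2 ha) j
  exact PowerSeries.X_pow_dvd_iff.1 hd i h

lemma coeff_eval₂ {a : ℚ⟦X⟧} (ha : constantCoeff a = 0) (n : ℕ) (P : Polynomial ℚ) :
    coeff n (Polynomial.eval₂ (C : ℚ →+* ℚ⟦X⟧) a P)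
      = ∑ i ∈ Finset.range (n + 1), P.coeff i * coeff n (a ^ i) := by
  rw [Polynomial.eval₂_eq_sum_range' (C : ℚ →+* ℚ⟦X⟧)
    (lt_of_lt_of_le (Nat.lt_succ_self _) (le_max_left (P.natDegree + 1) (n + 1))) a, map_sum]
  simp only [coeff_C_mul]
  refine (Finset.sum_subset (Finset.range_subset_range.2 (le_max_right _ _)) ?_).symm
  intro i _ hi
  have hni : n < i := by
    simp only [Finset.mem_range] at hi; omega
  rw [coeff_pow_eq_zero ha hni, mul_zero]

lemma coeff_substitute_eq {a : ℚ⟦X⟧} (ha : constantCoeff a = 0) (f : ℚ⟦X⟧) (n : ℕ)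
    (P : Polynomial ℚ) (hP : ∀ i ≤ n, P.coeff i = coeff i f) :
    coeff n (PowerSeries.substitute a f) = coeff n (Polynomial.eval₂ (C : ℚ →+* ℚ⟦X⟧) a P) := by
  rw [coeff_substitute, coeff_eval₂ ha]
  refine (Finset.sum_congr rfl fun i hi => ?_).symm
  rw [hP i (by simpa [Nat.lt_succ_iff] using hi)]

lemma substitute_mul {a : ℚ⟦X⟧} (ha : constantCoeff a = 0) (f g : ℚ⟦X⟧) :
    PowerSeries.substitute a (f * g)
      = PowerSeries.substitute a f * PowerSeries.substitute a g := by
  ext n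
  have hf : ∀ p ≤ n, coeff p (PowerSeries.substitute a f)
      = coeff p (Polynomial.eval₂ (C : ℚ →+* ℚ⟦X⟧) a (trunc (n + 1) f)) := by
    intro p hp
    refine coeff_substitute_eq ha f p _ fun i hi => ?_
    rw [PowerSeries.coeff_trunc, if_pos (by omega)]
  have hg : ∀ p ≤ n, coeff p (PowerSeries.substitute a g)
      = coeff p (Polynomial.eval₂ (C : ℚ →+* ℚ⟦X⟧) a (trunc (n + 1) g)) := by
    intro p hp
    refine coeff_substitute_eq ha g p _ fun i hi => ?_
    rw [PowerSeries.coeff_trunc, if_pos (by omega)]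
  have hfg : coeff n (PowerSeries.substitute a (f * g))
      = coeff n (Polynomial.eval₂ (C : ℚ →+* ℚ⟦X⟧) a (trunc (n + 1) f * trunc (n + 1) g)) := by
    refine coeff_substitute_eq ha _ n _ fun i hi => ?_
    have h1 := PowerSeries.trunc_trunc_mul_trunc (n := n + 1) f g
    calc (trunc (n + 1) f * trunc (n + 1) g).coeff i
        = coeff i (((trunc (n + 1) f * trunc (n + 1) g : Polynomial ℚ)) : ℚ⟦X⟧) :=
          (Polynomial.coeff_coe _ _).symm
      _ = coeff i (((trunc (n + 1) f : ℚ⟦X⟧)) * ((trunc (n + 1) g : ℚ⟦X⟧))) := by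
          rw [Polynomial.coe_mul]
      _ = (trunc (n + 1) (((trunc (n + 1) f : ℚ⟦X⟧)) * ((trunc (n + 1) g : ℚ⟦X⟧)))).coeff i := by
          rw [PowerSeries.coeff_trunc, if_pos (by omega)]
      _ = (trunc (n + 1) (f * g)).coeff i := by rw [h1]
      _ = coeff i (f * g) := by rw [PowerSeries.coeff_trunc, if_pos (by omega)]
  rw [hfg, Polynomial.eval₂_mul, PowerSeries.coeff_mul, PowerSeries.coeff_mul]
  refine Finset.sum_congr rfl fun pq hpq => ?_
  have hmem := Finset.HasAntidiagonal.mem_antidiagonal.1 hpq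
  rw [hf pq.1 (by omega), hg pq.2 (by omega)]

lemma substitute_one {a : ℚ⟦X⟧} (ha : constantCoeff a = 0) :
    PowerSeries.substitute a (1 : ℚ⟦X⟧) = 1 := by
  ext n
  rw [coeff_substitute_eq ha 1 n 1
    (fun i _ => by simp [Polynomial.coeff_one, PowerSeries.coeff_one]), Polynomial.eval₂_one]

lemma substitute_X {a : ℚ⟦X⟧} (ha : constantCoeff a = 0) :
    PowerSeries.substitute a (PowerSeries.X : ℚ⟦X⟧) = a := by
  ext n
  rw [coeff_substitute_eq ha PowerSeries.X n Polynomial.X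
    (fun i _ => by simp [Polynomial.coeff_X, PowerSeries.coeff_X, eq_comm]), Polynomial.eval₂_X]

lemma substitute_pow {a : ℚ⟦X⟧} (ha : constantCoeff a = 0) (f : ℚ⟦X⟧) (n : ℕ) :
    PowerSeries.substitute a (f ^ n) = (PowerSeries.substitute a f) ^ n := by
  induction n with
  | zero => simpa using substitute_one ha
  | succ k ih => rw [pow_succ, substitute_mul ha, ih, pow_succ]

end LagrangeAux


namespace LagrangeAux2

lemma derivFun_eq (f : ℚ⟦X⟧) : d⁄dX ℚ f = PowerSeries.derivativeFun f := rfl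

lemma derivFun_X : PowerSeries.derivativeFun (PowerSeries.X : ℚ⟦X⟧) = 1 := by
  rw [← derivFun_eq, PowerSeries.derivative_X]

lemma derivFun_pow (v : ℚ⟦X⟧) (e : ℕ) :
    PowerSeries.derivativeFun (v ^ (e + 1))
      = ((e + 1 : ℕ) : ℚ⟦X⟧) * (v ^ e * PowerSeries.derivativeFun v) := by
  induction e with
  | zero => simp
  | succ k ih =>
    rw [pow_succ, PowerSeries.derivativeFun_mul, smul_eq_mul, smul_eq_mul, ih]
    push_cast
    ring

lemma derivFun_Xu (u : ℚ⟦X⟧) :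
    PowerSeries.derivativeFun (PowerSeries.X * u)
      = PowerSeries.X * PowerSeries.derivativeFun u + u := by
  rw [PowerSeries.derivativeFun_mul, derivFun_X, smul_eq_mul, smul_eq_mul, mul_one]

lemma res_aux (u v : ℚ⟦X⟧) (huv : u * v = 1) (e : ℕ) :
    coeff e (v ^ (e + 1) * PowerSeries.derivativeFun (PowerSeries.X * u))
      = if e = 0 then 1 else 0 := by
  rcases Nat.eq_zero_or_pos e with rfl | hpos
  · rw [if_pos rfl, pow_one, PowerSeries.coeff_zero_eq_constantCoeff, map_mul, derivFun_Xu,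
      map_add, map_mul, PowerSeries.constantCoeff_X, zero_mul, zero_add]
    have h0 : constantCoeff u * constantCoeff v = 1 := by
      have := congrArg (constantCoeff) huv
      simpa using this
    rw [mul_comm]; exact h0
  · obtain ⟨e', rfl⟩ : ∃ e', e = e' + 1 := ⟨e - 1, by omega⟩
    rw [if_neg (Nat.succ_ne_zero _)]
    have hDv : PowerSeries.derivativeFun v
        = -(v ^ 2 * PowerSeries.derivativeFun u) := by
      have h1 : u * PowerSeries.derivativeFun v + v * PowerSeries.derivativeFun u = 0 := by
        rw [← smul_eq_mul, ← smul_eq_mul, ← PowerSeries.derivativeFun_mul, huv,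
          PowerSeries.derivativeFun_one]
      linear_combination v * h1 - PowerSeries.derivativeFun v * huv
    have key : ((e' + 1 : ℕ) : ℚ⟦X⟧) * (v ^ (e' + 1 + 1) * PowerSeries.derivativeFun (PowerSeries.X * u))
        = ((e' + 1 : ℕ) : ℚ⟦X⟧) * v ^ (e' + 1)
          - PowerSeries.X * PowerSeries.derivativeFun (v ^ (e' + 1)) := by
      rw [derivFun_pow, derivFun_Xu, hDv]
      linear_combination ((e' + 1 : ℕ) : ℚ⟦X⟧) * v ^ (e' + 1) * huv
    have hc := congrArg (coeff (e' + 1)) key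
    rw [show ((e' + 1 : ℕ) : ℚ⟦X⟧) = C ((e' + 1 : ℕ) : ℚ) from (map_natCast (C : ℚ →+* ℚ⟦X⟧) _).symm] at hc
    rw [map_sub, coeff_C_mul, coeff_C_mul, PowerSeries.coeff_succ_X_mul,
      (by exact fun f n => PowerSeries.coeff_derivative f n : ∀ (f : ℚ⟦X⟧) (n : ℕ), coeff n f.derivativeFun = coeff (n + 1) f * (n + 1))] at hc
    have hne : ((e' + 1 : ℕ) : ℚ) ≠ 0 := by exact_mod_cast Nat.succ_ne_zero e'
    have h0 : ((e' + 1 : ℕ) : ℚ)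
        * coeff (e' + 1) (v ^ (e' + 1 + 1) * PowerSeries.derivativeFun (PowerSeries.X * u)) = 0 := by
      rw [hc]; push_cast; ring
    exact (mul_eq_zero.1 h0).resolve_left hne

end LagrangeAux2

open PowerSeries LagrangeAux LagrangeAux2

namespace LagrangeAux3

lemma key_lemma (u v : ℚ⟦X⟧) (huv : u * v = 1) (G : ℚ⟦X⟧) (k : ℕ) :
    coeff k (v ^ (k + 1) * PowerSeries.substitute (PowerSeries.X * u) G
      * PowerSeries.derivativeFun (PowerSeries.X * u)) = coeff k G := by
  set a : ℚ⟦X⟧ := PowerSeries.X * u with ha_def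
  have ha : constantCoeff a = 0 := by
    rw [ha_def, map_mul, PowerSeries.constantCoeff_X, zero_mul]
  set S : ℚ⟦X⟧ := ∑ j ∈ Finset.range (k + 1), C (coeff j G) * a ^ j with hS
  have hdvd : (PowerSeries.X : ℚ⟦X⟧) ^ (k + 1) ∣ (PowerSeries.substitute a G - S) := by
    rw [PowerSeries.X_pow_dvd_iff]
    intro m hm
    rw [map_sub, coeff_substitute, hS, map_sum]
    simp only [coeff_C_mul]
    rw [sub_eq_zero]
    refine Finset.sum_subset (Finset.range_subset_range.2 (by omega)) ?_
    intro j _ hj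
    have hmj : m < j := by simp only [Finset.mem_range] at hj; omega
    rw [coeff_pow_eq_zero ha hmj, mul_zero]
  obtain ⟨R, hR⟩ := hdvd
  have hsub : PowerSeries.substitute a G = S + PowerSeries.X ^ (k + 1) * R := by
    linear_combination hR
  rw [hsub, mul_add, add_mul, map_add]
  have hzero : coeff k (v ^ (k + 1) * (PowerSeries.X ^ (k + 1) * R)
      * PowerSeries.derivativeFun a) = 0 := by
    have heq : v ^ (k + 1) * (PowerSeries.X ^ (k + 1) * R) * PowerSeries.derivativeFun a
        = PowerSeries.X ^ (k + 1) * (v ^ (k + 1) * R * PowerSeries.derivativeFun a) := by ring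
    rw [heq]
    exact PowerSeries.X_pow_dvd_iff.1 ⟨_, rfl⟩ k (by omega)
  rw [hzero, add_zero, hS, Finset.mul_sum, Finset.sum_mul, map_sum]
  have hterm : ∀ j ∈ Finset.range (k + 1),
      coeff k (v ^ (k + 1) * (C (coeff j G) * a ^ j) * PowerSeries.derivativeFun a)
        = if j = k then coeff j G else 0 := by
    intro j hj
    have hjk : j ≤ k := by simp only [Finset.mem_range] at hj; omega
    have hvu : v ^ j * u ^ j = 1 := by rw [← mul_pow, mul_comm v u, huv, one_pow]
    have h1 : v ^ (k + 1) * (C (coeff j G) * a ^ j) * PowerSeries.derivativeFun a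
        = C (coeff j G)
          * (PowerSeries.X ^ j * (v ^ (k - j + 1) * PowerSeries.derivativeFun a)) := by
      calc v ^ (k + 1) * (C (coeff j G) * a ^ j) * PowerSeries.derivativeFun a
          = C (coeff j G)
            * (PowerSeries.X ^ j * (v ^ (k - j + 1) * PowerSeries.derivativeFun a))
            * (v ^ j * u ^ j) := by
            rw [show k + 1 = (k - j + 1) + j from (by omega), ha_def, mul_pow, pow_add]; ring
        _ = _ := by rw [hvu, mul_one]
    rw [h1, coeff_C_mul, show k = (k - j) + j from (by omega)]
    rw [PowerSeries.coeff_X_pow_mul]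
    rw [show k - j + j - j = k - j from (by omega)]
    rw [ha_def, res_aux u v huv (k - j)]
    by_cases hcase : j = k
    · rw [if_pos (show j = k - j + j by omega), if_pos (show k - j = 0 by omega), mul_one]
    · rw [if_neg (show ¬ j = k - j + j by omega), if_neg (show ¬ k - j = 0 by omega), mul_zero]
  rw [Finset.sum_congr rfl hterm,
    Finset.sum_ite_eq' (Finset.range (k + 1)) k (fun j => coeff j G),
    if_pos (Finset.self_mem_range_succ k)]

end LagrangeAux3


open PowerSeries LagrangeAux LagrangeAux2 LagrangeAux3 in
/-- **Lagrange inversion, formal version.**  Let `ψ` be a formal power series over `ℚ`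
with nonzero constant term, let `y(x) = x·ψ(x)`, and let `xser = x(y)` be the formal
power series with zero constant term which is the compositional inverse of `y(x)`
(substituting `x(y)` into `y(x)` gives the identity series).  Then for every formal
power series `H` and every `n ≥ 1`, the coefficient of `y^n` in `H(x(y))` equals
`(1/n)·[a^(n-1)] (ψ(a)^(-n) · H'(a))`, and the constant coefficient of `H(x(y))`
equals that of `H`. -/
theorem lagrange_inversion_formal (ψ : ℚ⟦X⟧) (hψ : constantCoeff ψ ≠ 0)
    (xser : ℚ⟦X⟧) (hx0 : constantCoeff xser = 0)
    (hinv : PowerSeries.substitute xser (PowerSeries.X * ψ) = PowerSeries.X) :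
    ∀ H : ℚ⟦X⟧,
      (∀ n : ℕ, 1 ≤ n →
        coeff n (PowerSeries.substitute xser H)
          = (1 / (n : ℚ)) * coeff (n - 1) ((ψ ^ n)⁻¹ * H.derivativeFun)) ∧
      coeff 0 (PowerSeries.substitute xser H) = coeff 0 H := by
  intro H
  set Ψ : ℚ⟦X⟧ := PowerSeries.substitute xser ψ with hΨdef
  have hxΨ : xser * Ψ = PowerSeries.X := by
    have hm := substitute_mul hx0 PowerSeries.X ψ
    rw [substitute_X hx0] at hm
    rw [hΨdef, ← hm, hinv]
  have hΨ0 : constantCoeff Ψ ≠ 0 := by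
    have h1 : coeff 0 Ψ = coeff 0 ψ := by
      rw [hΨdef, coeff_substitute, Finset.sum_range_one, pow_zero]
      simp
    rw [← coeff_zero_eq_constantCoeff, h1, coeff_zero_eq_constantCoeff]
    exact hψ
  set u : ℚ⟦X⟧ := Ψ⁻¹ with hu_def
  have hΨu : Ψ * u = 1 := PowerSeries.mul_inv_cancel Ψ hΨ0
  have huv : u * Ψ = 1 := by rw [mul_comm]; exact hΨu
  have hw : xser = PowerSeries.X * u := by
    calc xser = xser * (Ψ * u) := by rw [hΨu, mul_one]
      _ = (xser * Ψ) * u := by ring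
      _ = PowerSeries.X * u := by rw [hxΨ]
  constructor
  · intro n hn
    obtain ⟨n', rfl⟩ : ∃ n', n = n' + 1 := ⟨n - 1, by omega⟩
    set G : ℚ⟦X⟧ := (ψ ^ (n' + 1))⁻¹ with hG_def
    have hψn0 : constantCoeff (ψ ^ (n' + 1)) ≠ 0 := by
      rw [map_pow]; exact pow_ne_zero _ hψ
    have hGmul : ψ ^ (n' + 1) * G = 1 := PowerSeries.mul_inv_cancel _ hψn0
    have hsubG : PowerSeries.substitute xser G = u ^ (n' + 1) := by
      have h1 : Ψ ^ (n' + 1) * PowerSeries.substitute xser G = 1 := by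
        rw [hΨdef, ← substitute_pow hx0, ← substitute_mul hx0, hGmul, substitute_one hx0]
      calc PowerSeries.substitute xser G
          = (PowerSeries.substitute xser G) * (Ψ ^ (n' + 1) * u ^ (n' + 1)) := by
            rw [← mul_pow, hΨu, one_pow, mul_one]
        _ = (Ψ ^ (n' + 1) * PowerSeries.substitute xser G) * u ^ (n' + 1) := by ring
        _ = u ^ (n' + 1) := by rw [h1, one_mul]
    have hmono : ∀ m ∈ Finset.range (n' + 2),
        ((n' + 1 : ℕ) : ℚ) * coeff (n' + 1) (xser ^ m)
          = (m : ℚ) * coeff (n' + 1 - m) G := by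
      intro m hm
      rcases Nat.eq_zero_or_pos m with rfl | hm1
      · simp [PowerSeries.coeff_one]
      obtain ⟨m', rfl⟩ : ∃ m', m = m' + 1 := ⟨m - 1, by omega⟩
      have hmn : m' ≤ n' := by simp only [Finset.mem_range] at hm; omega
      set k := n' - m' with hk_def
      -- step 1: n * coeff n (xser^m) = coeff (n-1) (D (xser^m))
      have h1 : ((n' + 1 : ℕ) : ℚ) * coeff (n' + 1) (xser ^ (m' + 1))
          = coeff n' (PowerSeries.derivativeFun (xser ^ (m' + 1))) := by
        rw [(by exact fun f n => PowerSeries.coeff_derivative f n : ∀ (f : ℚ⟦X⟧) (n : ℕ), coeff n f.derivativeFun = coeff (n + 1) f * (n + 1))]; push_cast; ring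
      -- step 2: Leibniz for powers
      have h2 : coeff n' (PowerSeries.derivativeFun (xser ^ (m' + 1)))
          = ((m' + 1 : ℕ) : ℚ) * coeff n' (xser ^ m' * PowerSeries.derivativeFun xser) := by
        rw [derivFun_pow,
          show ((m' + 1 : ℕ) : ℚ⟦X⟧) = C ((m' + 1 : ℕ) : ℚ) from (map_natCast (C : ℚ →+* ℚ⟦X⟧) _).symm,
          coeff_C_mul]
      -- step 3: rearrange into key-lemma shape
      have h4 : Ψ ^ (k + 1) * u ^ (k + 1) = 1 := by rw [← mul_pow, hΨu, one_pow]
      have h3 : xser ^ m' * PowerSeries.derivativeFun xser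
          = PowerSeries.X ^ m'
            * (Ψ ^ (k + 1) * PowerSeries.substitute (PowerSeries.X * u) G
               * PowerSeries.derivativeFun (PowerSeries.X * u)) := by
        rw [← hw, hsubG, hw,
          show n' + 1 = m' + (k + 1) from (by omega), pow_add, mul_pow]
        linear_combination (-(PowerSeries.X ^ m' * u ^ m'
          * PowerSeries.derivativeFun (PowerSeries.X * u))) * h4
      have h5 : coeff n' (xser ^ m' * PowerSeries.derivativeFun xser) = coeff k G := by
        rw [h3, show n' = k + m' from (by omega), PowerSeries.coeff_X_pow_mul,
          key_lemma u Ψ huv G k]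
      rw [h1, h2, h5, show n' + 1 - (m' + 1) = k from (by omega)]
    -- assemble the sum
    have hNne : ((n' + 1 : ℕ) : ℚ) ≠ 0 := by exact_mod_cast Nat.succ_ne_zero n'
    have hsum : ((n' + 1 : ℕ) : ℚ) * coeff (n' + 1) (PowerSeries.substitute xser H)
        = coeff n' (G * PowerSeries.derivativeFun H) := by
      rw [coeff_substitute, Finset.mul_sum]
      have hstep : ∀ m ∈ Finset.range (n' + 2),
          ((n' + 1 : ℕ) : ℚ) * (coeff m H * coeff (n' + 1) (xser ^ m))
            = coeff m H * ((m : ℚ) * coeff (n' + 1 - m) G) := by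
        intro m hm
        calc ((n' + 1 : ℕ) : ℚ) * (coeff m H * coeff (n' + 1) (xser ^ m))
            = coeff m H * (((n' + 1 : ℕ) : ℚ) * coeff (n' + 1) (xser ^ m)) := by ring
          _ = _ := by rw [hmono m hm]
      have hRHS : coeff n' (G * PowerSeries.derivativeFun H)
          = ∑ i ∈ Finset.range (n' + 1),
              coeff (n' - i) G * coeff i (PowerSeries.derivativeFun H) := by
        rw [PowerSeries.coeff_mul, Finset.Nat.sum_antidiagonal_eq_sum_range_succ_mk,
          ← Finset.sum_range_reflect]
        refine Finset.sum_congr rfl fun i hi => ?_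
        have hi' : i ≤ n' := by simp only [Finset.mem_range] at hi; omega
        rw [show n' + 1 - 1 - i = n' - i from (by omega),
          show n' - (n' - i) = i from (by omega)]
      rw [Finset.sum_congr rfl hstep, hRHS, Finset.sum_range_succ']
      simp only [Nat.cast_zero, zero_mul, mul_zero, add_zero]
      refine Finset.sum_congr rfl fun i hi => ?_
      have hi' : i ≤ n' := by simp only [Finset.mem_range] at hi; omega
      rw [show n' + 1 - (i + 1) = n' - i from (by omega), (by exact fun f n => PowerSeries.coeff_derivative f n : ∀ (f : ℚ⟦X⟧) (n : ℕ), coeff n f.derivativeFun = coeff (n + 1) f * (n + 1))]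
      push_cast; ring
    rw [show (n' + 1 : ℕ) - 1 = n' from (by omega), ← hsum, one_div,
      inv_mul_cancel_left₀ hNne]
  · rw [coeff_substitute, Finset.sum_range_one, pow_zero]
    simp
end

section
/- Let F be a formal power series over ℚ with F(0) = 0 and with the coefficient of x^1 in F nonzero, and define A(n,m) := [x^n]( F(x)^m ). Work in the ring (ℚ[[t]])[[y]] and let X = x(t;y) be the element with zero constant term satisfying X − t·F(X) = y, i.e., the compositional inverse of y(t;x) = x − t·F(x). Then for all integers d ≥ 0 and p ≥ 0, the coefficient of t^p·y^{d+1} in x(t;y) equals binom(d+p,p)·A(d+p,p)/(d+1). Equivalently, x(t;y) = Σ_{d≥0} G D̂(d,t)·y^{d+1}/(d+1), where G D̂(d,t) := Σ_{p≥0} binom(d+p,p)·A(d+p,p)·t^p. -/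
open PowerSeries Finset

namespace PowerSeries

variable {R : Type*} [CommRing R] {a : R⟦X⟧} (ha : constantCoeff (R := R) a = 0)

lemma coeff_substitute (f : R⟦X⟧) (n : ℕ) :
    coeff (R := R) n (substitute a f) = ∑ k ∈ Finset.range (n + 1),
      coeff (R := R) k f * coeff (R := R) n (a ^ k) := coeff_mk _ _

include ha in
lemma coeff_pow_eq_zero {n k : ℕ} (h : n < k) : coeff (R := R) n (a ^ k) = 0 := by
  have hdvd : (X : R⟦X⟧) ^ k ∣ a ^ k := pow_dvd_pow_of_dvd (X_dvd_iff.mpr ha) k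
  exact (X_pow_dvd_iff.mp hdvd) n h

include ha in
lemma coeff_substitute_mul (f h : R⟦X⟧) (n : ℕ) :
    coeff (R := R) n (substitute a f * h) = ∑ k ∈ Finset.range (n + 1),
      coeff (R := R) k f * coeff (R := R) n (a ^ k * h) := by
  rw [coeff_mul]
  have step : ∀ pq ∈ antidiagonal n,
      coeff (R := R) pq.1 (substitute a f) * coeff (R := R) pq.2 h
        = ∑ k ∈ range (n + 1), coeff (R := R) k f * (coeff (R := R) pq.1 (a ^ k) * coeff (R := R) pq.2 h) := by
    intro pq hpq
    have hle : pq.1 + 1 ≤ n + 1 := by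
      have := (mem_antidiagonal.mp hpq); omega
    rw [coeff_substitute, ← Finset.sum_subset (Finset.range_subset_range.mpr hle)
      (fun k _ hk => by
        rw [coeff_pow_eq_zero ha (by simpa using hk : pq.1 < k)]; ring),
      Finset.sum_mul]
    simp [mul_assoc]
  rw [Finset.sum_congr rfl step, Finset.sum_comm]
  refine Finset.sum_congr rfl fun k _ => ?_
  rw [← Finset.mul_sum, coeff_mul]

include ha in
lemma substitute_X : substitute a X = a := by
  ext n
  rw [coeff_substitute]
  rw [Finset.sum_eq_single 1]
  · simp
  · intro k _ hk
    rw [coeff_X, if_neg hk, zero_mul]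
  · intro h
    simp only [mem_range] at h
    have hn : n = 0 := by omega
    subst hn
    simp [ha, coeff_zero_eq_constantCoeff]

lemma substitute_C (r : R) : substitute a (C (R := R) r) = C (R := R) r := by
  ext n
  rw [coeff_substitute, Finset.sum_eq_single 0]
  · simp [coeff_zero_eq_constantCoeff, coeff_C, coeff_one]
  · intro k _ hk
    rw [coeff_C, if_neg hk, zero_mul]
  · simp

lemma substitute_one : substitute a (1 : R⟦X⟧) = 1 := by
  simpa using substitute_C (a := a) 1

lemma substitute_sub (f g : R⟦X⟧) :
    substitute a (f - g) = substitute a f - substitute a g := by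
  ext n; simp [coeff_substitute, sub_mul, Finset.sum_sub_distrib]

lemma substitute_add (f g : R⟦X⟧) :
    substitute a (f + g) = substitute a f + substitute a g := by
  ext n; simp [coeff_substitute, add_mul, Finset.sum_add_distrib]

include ha in
lemma substitute_mul (f g : R⟦X⟧) :
    substitute a (f * g) = substitute a f * substitute a g := by
  ext n
  rw [coeff_substitute_mul ha]
  have rhs : ∀ k ∈ range (n+1), coeff (R := R) k f * coeff (R := R) n (a ^ k * substitute a g)
      = ∑ j ∈ range (n+1), coeff (R := R) k f * coeff (R := R) j g * coeff (R := R) n (a ^ (k + j)) := by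
    intro k _
    rw [mul_comm (a ^ k), coeff_substitute_mul ha, Finset.mul_sum]
    refine Finset.sum_congr rfl fun j _ => ?_
    rw [pow_add, mul_comm (a ^ k)]; ring
  rw [Finset.sum_congr rfl rhs, coeff_substitute]
  -- LHS: ∑ m ≤ n, (∑ ij ∈ antidiagonal m, f_i g_j) * (a^m)_n
  -- turn into sum over sigma
  have lhs : ∀ m ∈ range (n+1), coeff (R := R) m (f * g) * coeff (R := R) n (a ^ m)
      = ∑ ij ∈ antidiagonal m, coeff (R := R) ij.1 f * coeff (R := R) ij.2 g * coeff (R := R) n (a ^ (ij.1 + ij.2)) := by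
    intro m hm
    rw [coeff_mul, Finset.sum_mul]
    refine Finset.sum_congr rfl fun ij hij => ?_
    rw [mem_antidiagonal.mp hij]
  rw [Finset.sum_congr rfl lhs]
  have key : ∀ ij : ℕ × ℕ, n < ij.1 + ij.2 →
      coeff (R := R) ij.1 f * coeff (R := R) ij.2 g * coeff (R := R) n (a ^ (ij.1 + ij.2)) = 0 := fun ij h => by
    rw [coeff_pow_eq_zero ha h, mul_zero]
  calc ∑ x ∈ range (n+1), ∑ ij ∈ antidiagonal x,
        coeff (R := R) ij.1 f * coeff (R := R) ij.2 g * coeff (R := R) n (a ^ (ij.1 + ij.2))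
      = ∑ x ∈ (range (n+1)).sigma (fun m => antidiagonal m),
        coeff (R := R) x.2.1 f * coeff (R := R) x.2.2 g * coeff (R := R) n (a ^ (x.2.1 + x.2.2)) := by
        rw [Finset.sum_sigma]
    _ = ∑ ij ∈ (range (n+1) ×ˢ range (n+1)).filter (fun ij => ij.1 + ij.2 ≤ n),
        coeff (R := R) ij.1 f * coeff (R := R) ij.2 g * coeff (R := R) n (a ^ (ij.1 + ij.2)) := by
        refine Finset.sum_nbij' (fun x => x.2) (fun ij => ⟨ij.1 + ij.2, ij⟩) ?_ ?_ ?_ ?_ ?_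
        · rintro ⟨m, ij⟩ hx
          simp only [Finset.mem_sigma, mem_range, Finset.HasAntidiagonal.mem_antidiagonal] at hx
          simp only [Finset.mem_filter, Finset.mem_product, mem_range]
          omega
        · rintro ⟨i, j⟩ hij
          rw [Finset.mem_filter] at hij
          have hs' : i + j ≤ n := hij.2
          simp only [Finset.mem_sigma, mem_range, Finset.HasAntidiagonal.mem_antidiagonal]
          exact ⟨by omega, trivial⟩
        · rintro ⟨m, ij⟩ hx
          simp only [Finset.mem_sigma, mem_range, Finset.HasAntidiagonal.mem_antidiagonal] at hx
          simp [hx.2]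
        · rintro ⟨i, j⟩ _
          rfl
        · rintro ⟨m, ij⟩ _
          rfl
    _ = ∑ ij ∈ range (n+1) ×ˢ range (n+1),
        coeff (R := R) ij.1 f * coeff (R := R) ij.2 g * coeff (R := R) n (a ^ (ij.1 + ij.2)) := by
        refine Finset.sum_filter_of_ne fun x hx h0 => ?_
        by_contra hc
        exact h0 (key x (by omega))
    _ = ∑ k ∈ range (n+1), ∑ j ∈ range (n+1),
        coeff (R := R) k f * coeff (R := R) j g * coeff (R := R) n (a ^ (k + j)) := Finset.sum_product _ _ _

include ha in
lemma substitute_pow (f : R⟦X⟧) (k : ℕ) :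
    substitute a (f ^ k) = (substitute a f) ^ k := by
  induction k with
  | zero => simpa using substitute_one (a := a)
  | succ k ih => rw [pow_succ, substitute_mul ha, ih, pow_succ]

lemma constantCoeff_substitute (f : R⟦X⟧) :
    constantCoeff (R := R) (substitute a f) = constantCoeff (R := R) f := by
  have := coeff_substitute (a := a) f 0
  simp only [coeff_zero_eq_constantCoeff] at this ⊢
  simpa using this

include ha in
lemma substitute_assoc {b : R⟦X⟧} (hb : constantCoeff (R := R) b = 0) (f : R⟦X⟧) :
    substitute a (substitute b f) = substitute (substitute a b) f := by
  ext n
  rw [coeff_substitute, coeff_substitute]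
  have h1 : ∀ k ∈ range (n+1), coeff (R := R) k (substitute b f) * coeff (R := R) n (a^k)
      = ∑ j ∈ range (n+1), coeff (R := R) j f * (coeff (R := R) k (b^j) * coeff (R := R) n (a^k)) := by
    intro k hk
    have hk' : k + 1 ≤ n + 1 := by simp only [mem_range] at hk; omega
    rw [coeff_substitute, ← Finset.sum_subset (Finset.range_subset_range.mpr hk')
      (fun j _ hj => by rw [coeff_pow_eq_zero hb (by simpa using hj)]; ring),
      Finset.sum_mul]
    simp [mul_assoc]
  rw [Finset.sum_congr rfl h1, Finset.sum_comm]
  refine Finset.sum_congr rfl fun j _ => ?_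
  rw [← Finset.mul_sum]
  congr 1
  rw [← substitute_pow ha, coeff_substitute]

include ha in
lemma coeff_self_pow (n : ℕ) : coeff (R := R) n (a ^ n) = (coeff (R := R) 1 a) ^ n := by
  induction n with
  | zero => simp
  | succ n ih =>
    rw [pow_succ, coeff_mul, Finset.sum_eq_single (n, 1)]
    · rw [ih, pow_succ]
    · rintro ⟨u, v⟩ huv hne
      have hs := mem_antidiagonal.mp huv
      rcases lt_trichotomy u n with h | h | h
      · rw [coeff_pow_eq_zero ha h, zero_mul]
      · exfalso
        apply hne
        have hv : v = 1 := by simp only at hs; omega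
        simp [h, hv]
      · have hv : v = 0 := by omega
        subst hv
        rw [coeff_zero_eq_constantCoeff, ha, mul_zero]
    · intro hmem
      exact absurd (mem_antidiagonal.mpr rfl : (n, 1) ∈ antidiagonal (n + 1)) hmem

include ha in
lemma substitute_cancel (hu : IsUnit (coeff (R := R) 1 a)) {f g : R⟦X⟧}
    (h : substitute a f = substitute a g) : f = g := by
  ext n
  induction n using Nat.strong_induction_on with
  | _ n ih =>
    have hc := congrArg (coeff (R := R) n) h
    rw [coeff_substitute, coeff_substitute, Finset.sum_range_succ,
      Finset.sum_range_succ] at hc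
    rw [Finset.sum_congr rfl (fun k hk =>  by
      rw [ih k (mem_range.mp hk)] :
      ∀ k ∈ range n, coeff (R := R) k f * coeff (R := R) n (a^k) = coeff (R := R) k g * coeff (R := R) n (a^k))] at hc
    have hc2 : coeff (R := R) n f * coeff (R := R) n (a^n) = coeff (R := R) n g * coeff (R := R) n (a^n) :=
      add_left_cancel hc
    rw [coeff_self_pow ha] at hc2
    exact (hu.pow n).mul_right_cancel hc2

include ha in
lemma derivative_substitute (f : R⟦X⟧) :
    d⁄dX R (substitute a f) = substitute a (d⁄dX R f) * d⁄dX R a := by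
  have key : ∀ k n : ℕ, ((k:R) + 1) * coeff (R := R) n (a ^ k * d⁄dX R a)
      = coeff (R := R) (n+1) (a^(k+1)) * ((n:R)+1) := by
    intro k n
    have hD : d⁄dX R (a ^ (k+1)) = (k+1 : ℕ) • (a ^ k * d⁄dX R a) := by
      have := Derivation.leibniz_pow (d⁄dX R) a (k+1)
      simpa [smul_eq_mul] using this
    have := congrArg (coeff (R := R) n) hD
    rw [coeff_derivative, map_nsmul] at this
    have h2 : ((k:R) + 1) * coeff (R := R) n (a ^ k * d⁄dX R a)
        = (k + 1 : ℕ) • coeff (R := R) n (a ^ k * d⁄dX R a) := by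
      push_cast [nsmul_eq_mul]; ring
    rw [h2, ← this]
  ext n
  rw [coeff_derivative, coeff_substitute, coeff_substitute_mul ha, Finset.sum_mul,
    Finset.sum_range_succ']
  have h0 : coeff (R := R) 0 f * coeff (R := R) (n+1) (a ^ 0) * ((n:R)+1) = 0 := by
    simp [coeff_one]
  rw [h0, add_zero]
  refine Finset.sum_congr rfl fun k _ => ?_
  rw [coeff_derivative]
  calc coeff (R := R) (k+1) f * coeff (R := R) (n+1) (a^(k+1)) * ((n:R)+1)
      = coeff (R := R) (k+1) f * (coeff (R := R) (n+1) (a^(k+1)) * ((n:R)+1)) := by ring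
    _ = coeff (R := R) (k+1) f * (((k:R)+1) * coeff (R := R) n (a ^ k * d⁄dX R a)) := by rw [key]
    _ = coeff (R := R) (k+1) f * ((k:R)+1) * coeff (R := R) n (a ^ k * d⁄dX R a) := by ring

lemma derivative_mul' (f g : R⟦X⟧) :
    d⁄dX R (f * g) = f * d⁄dX R g + g * d⁄dX R f := by
  have h := derivativeFun_mul f g
  simpa [smul_eq_mul] using h

lemma derivative_pow' (f : R⟦X⟧) (n : ℕ) :
    d⁄dX R (f ^ (n+1)) = ((n : R⟦X⟧) + 1) * (f ^ n * d⁄dX R f) := by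
  induction n with
  | zero => simp
  | succ n ih =>
    rw [pow_succ, derivative_mul', ih]
    push_cast
    ring

lemma substitute_id (f : R⟦X⟧) : substitute (X : R⟦X⟧) f = f := by
  ext n
  rw [coeff_substitute, Finset.sum_eq_single n]
  · simp [PowerSeries.coeff_X_pow]
  · intro k _ hk
    rw [PowerSeries.coeff_X_pow, if_neg (fun h => hk h.symm), mul_zero]
  · intro h; simp at h

end PowerSeries

/-- **Associated Riordan case.**  Let `A = (1, F)` be an associated Riordan triangle,
with entries `A(n,m) = [x^n](F^m)`.  Let `X = x(t;y)` be the series in `(ℚ[[t]])[[y]]`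
with zero constant term satisfying `X − t·F(X) = y`, i.e. the compositional inverse of
`y(t;x) = x − t·F(x)`.  Then the coefficient of `t^p·y^(d+1)` in `x(t;y)` is
`binom(d+p,p)·A(d+p,p)/(d+1)`; i.e. `x(t;y) = Σ_d GD̂(d,t)·y^(d+1)/(d+1)` where
`GD̂(d,t) = Σ_p binom(d+p,p)·A(d+p,p)·t^p`. -/
theorem associated_riordan_diagonal_lgf (F : ℚ⟦X⟧)
    (hF0 : constantCoeff (R := ℚ) F = 0) (hF1 : coeff (R := ℚ) 1 F ≠ 0)
    (A : ℕ → ℕ → ℚ)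
    (hA : ∀ n m : ℕ, A n m = coeff (R := ℚ) n (F ^ m))
    (Xser : (ℚ⟦X⟧)⟦X⟧)
    (hX0 : constantCoeff (R := ℚ⟦X⟧) Xser = 0)
    (hXeq : Xser - PowerSeries.C (R := ℚ⟦X⟧) PowerSeries.X *
        PowerSeries.substitute Xser (PowerSeries.map (PowerSeries.C (R := ℚ)) F)
      = PowerSeries.X) :
    ∀ d p : ℕ,
      coeff (R := ℚ) p (coeff (R := ℚ⟦X⟧) (d + 1) Xser)
        = ((d + p).choose p : ℚ) * A (d + p) p / (d + 1) := by
  classical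
  intro d p
  set Ft : (ℚ⟦X⟧)⟦X⟧ := PowerSeries.map (PowerSeries.C (R := ℚ)) F with hFt
  set Ct : (ℚ⟦X⟧)⟦X⟧ := PowerSeries.C (R := ℚ⟦X⟧) PowerSeries.X with hCt
  set φ : (ℚ⟦X⟧)⟦X⟧ := PowerSeries.X - Ct * Ft with hφdef
  set g0 : ℚ⟦X⟧ := PowerSeries.mk fun n => coeff (R := ℚ) (n+1) F with hg0
  have hFg : F = PowerSeries.X * g0 := by
    ext n
    cases n with
    | zero => simp [coeff_zero_eq_constantCoeff, hF0]
    | succ n => rw [coeff_succ_X_mul, hg0, coeff_mk]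
  set G : (ℚ⟦X⟧)⟦X⟧ := PowerSeries.map (PowerSeries.C (R := ℚ)) g0 with hG
  set v : (ℚ⟦X⟧)⟦X⟧ := 1 - Ct * G with hv
  have hFtG : Ft = PowerSeries.X * G := by
    rw [hFt, hFg, map_mul, PowerSeries.map_X, hG]
  have hφv : φ = PowerSeries.X * v := by
    rw [hφdef, hv, hFtG]; ring
  have hφ0 : constantCoeff (R := ℚ⟦X⟧) φ = 0 := by
    have : constantCoeff (R := ℚ⟦X⟧) Ft = 0 := by
      rw [hFt, ← coeff_zero_eq_constantCoeff_apply, PowerSeries.coeff_map,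
        coeff_zero_eq_constantCoeff_apply, hF0, map_zero]
    simp [hφdef, this]
  clear_value Ft Ct φ g0 G v
  have hsub : PowerSeries.substitute Xser φ = PowerSeries.X := by
    rw [hφdef, substitute_sub, substitute_X hX0, substitute_mul hX0, hCt, substitute_C, ← hCt]
    exact hXeq
  have ha1 : IsUnit (coeff (R := ℚ⟦X⟧) 1 Xser) := by
    have h1 := congrArg (coeff (R := ℚ⟦X⟧) 1) hXeq
    rw [map_sub, PowerSeries.coeff_X, if_pos rfl, hCt, PowerSeries.coeff_C_mul,
      coeff_substitute] at h1
    have h2 : ∑ k ∈ Finset.range 2, coeff (R := ℚ⟦X⟧) k Ft * coeff (R := ℚ⟦X⟧) 1 (Xser ^ k)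
        = coeff (R := ℚ⟦X⟧) 1 Ft * coeff (R := ℚ⟦X⟧) 1 Xser := by
      rw [Finset.sum_range_succ, Finset.sum_range_one]
      have : coeff (R := ℚ⟦X⟧) 0 Ft = 0 := by
        rw [hFt, PowerSeries.coeff_map, coeff_zero_eq_constantCoeff_apply, hF0, map_zero]
      rw [this, zero_mul, zero_add, pow_one]
    rw [h2] at h1
    have hFt1 : coeff (R := ℚ⟦X⟧) 1 Ft = PowerSeries.C (R := ℚ) (coeff (R := ℚ) 1 F) := by
      rw [hFt, PowerSeries.coeff_map]
    rw [hFt1] at h1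
    refine IsUnit.of_mul_eq_one
      (1 - PowerSeries.X * PowerSeries.C (R := ℚ) (coeff (R := ℚ) 1 F)) ?_
    linear_combination h1
  have hXφ : PowerSeries.substitute φ Xser = PowerSeries.X := by
    apply substitute_cancel hX0 ha1
    rw [substitute_assoc hX0 hφ0, hsub, substitute_id, substitute_X hX0]
  have hder : PowerSeries.substitute φ (d⁄dX (ℚ⟦X⟧) Xser) * d⁄dX (ℚ⟦X⟧) φ = 1 := by
    have h := congrArg (d⁄dX (ℚ⟦X⟧)) hXφ
    rw [derivative_substitute hφ0, PowerSeries.derivative_X] at h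
    exact h
  set Wf : ℕ → (ℚ⟦X⟧)⟦X⟧ := fun j => PowerSeries.mk fun m => PowerSeries.mk fun q =>
    ((j + q).choose q : ℚ) * coeff (R := ℚ) m (g0 ^ q) with hWf
  have hGW : ∀ (j m q : ℕ), coeff (R := ℚ) q (coeff (R := ℚ⟦X⟧) m (G * Wf j))
      = ((j + q).choose q : ℚ) * coeff (R := ℚ) m (g0 ^ (q+1)) := by
    intro j m q
    rw [PowerSeries.coeff_mul, map_sum]
    have hgp : g0 ^ (q+1) = g0 * g0 ^ q := by ring
    rw [hgp, PowerSeries.coeff_mul, Finset.mul_sum]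
    refine Finset.sum_congr rfl fun uw huw => ?_
    rw [hG, PowerSeries.coeff_map, hWf]
    simp only [coeff_mk, PowerSeries.coeff_C_mul]
    ring
  have hCtZ : ∀ (Z : (ℚ⟦X⟧)⟦X⟧) (m q : ℕ), coeff (R := ℚ) q (coeff (R := ℚ⟦X⟧) m (Ct * Z))
      = if q = 0 then 0 else coeff (R := ℚ) (q-1) (coeff (R := ℚ⟦X⟧) m Z) := by
    intro Z m q
    rw [hCt, PowerSeries.coeff_C_mul]
    cases q with
    | zero =>
      simp [coeff_zero_eq_constantCoeff, map_mul]
    | succ q =>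
      rw [if_neg (Nat.succ_ne_zero q), coeff_succ_X_mul, Nat.add_sub_cancel]
  have hrec : ∀ j : ℕ, v * Wf (j+1) = Wf j := by
    intro j
    have expand : v * Wf (j+1) = Wf (j+1) - Ct * (G * Wf (j+1)) := by rw [hv]; ring
    ext m q
    rw [expand, map_sub, map_sub, hCtZ, hGW]
    simp only [hWf, coeff_mk]
    cases q with
    | zero => simp
    | succ q =>
      rw [if_neg (Nat.succ_ne_zero q), Nat.add_sub_cancel]
      have hch : ((j+1+(q+1)).choose (q+1) : ℚ)
          = ((j+1+q).choose q : ℚ) + ((j+(q+1)).choose (q+1) : ℚ) := by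
        have h := Nat.choose_succ_succ (j+q+1) q
        have e1 : j+1+(q+1) = (j+q+1)+1 := by ring
        have e2 : j+1+q = j+q+1 := by ring
        have e3 : j+(q+1) = j+q+1 := by ring
        rw [e1, e2, e3]
        exact_mod_cast h
      linear_combination (coeff (R := ℚ) m (g0^(q+1))) * hch
  have hbase : v * Wf 0 = 1 := by
    have expand : v * Wf 0 = Wf 0 - Ct * (G * Wf 0) := by rw [hv]; ring
    ext m q
    rw [expand, map_sub, map_sub, hCtZ, hGW]
    simp only [hWf, coeff_mk]
    cases q with
    | zero =>
      simp [PowerSeries.coeff_one, apply_ite (coeff (R := ℚ) 0)]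
    | succ q =>
      rw [if_neg (Nat.succ_ne_zero q), Nat.add_sub_cancel]
      simp [PowerSeries.coeff_one, apply_ite (coeff (R := ℚ) (q+1))]
  have hWinv : ∀ j, v^(j+1) * Wf j = 1 := by
    intro j; induction j with
    | zero => simpa using hbase
    | succ j ih =>
      calc v^(j+1+1) * Wf (j+1) = v^(j+1) * (v * Wf (j+1)) := by ring
        _ = v^(j+1) * Wf j := by rw [hrec]
        _ = 1 := ih
  have hvu : v * Wf 0 = 1 := hbase
  set u : (ℚ⟦X⟧)⟦X⟧ := Wf 0 with hu
  clear_value u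
  have hWu : ∀ j, Wf j = u^(j+1) := by
    intro j
    have h1 : v^(j+1) * u^(j+1) = 1 := by rw [← mul_pow, hvu, one_pow]
    calc Wf j = (u^(j+1) * v^(j+1)) * Wf j := by rw [mul_comm (u^(j+1)), h1, one_mul]
      _ = u^(j+1) * (v^(j+1) * Wf j) := by ring
      _ = u^(j+1) := by rw [hWinv j, mul_one]
  have hvu' : v * d⁄dX (ℚ⟦X⟧) u + u * d⁄dX (ℚ⟦X⟧) v = 0 := by
    have h := congrArg (d⁄dX (ℚ⟦X⟧)) hvu
    rw [derivative_mul'] at h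
    simpa using h
  have hdu : d⁄dX (ℚ⟦X⟧) u = -(d⁄dX (ℚ⟦X⟧) v * u^2) := by
    calc d⁄dX (ℚ⟦X⟧) u = (v * u) * d⁄dX (ℚ⟦X⟧) u := by rw [hvu, one_mul]
      _ = u * (v * d⁄dX (ℚ⟦X⟧) u) := by ring
      _ = u * (-(u * d⁄dX (ℚ⟦X⟧) v)) := by
          rw [show v * d⁄dX (ℚ⟦X⟧) u = -(u * d⁄dX (ℚ⟦X⟧) v) from by linear_combination hvu']
      _ = -(d⁄dX (ℚ⟦X⟧) v * u^2) := by ring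
  have hdφ : d⁄dX (ℚ⟦X⟧) φ = v + PowerSeries.X * d⁄dX (ℚ⟦X⟧) v := by
    rw [hφv, derivative_mul', PowerSeries.derivative_X, mul_one]
    ring
  have coeffk : ∀ k, k ≤ d →
      coeff (R := ℚ⟦X⟧) d (φ^k * (d⁄dX (ℚ⟦X⟧) φ * Wf d)) = if k = d then 1 else 0 := by
    intro k hk
    have hexp : φ^k * (d⁄dX (ℚ⟦X⟧) φ * Wf d)
        = PowerSeries.X^k * (v^(k+1) * Wf d)
          + PowerSeries.X^(k+1) * (v^k * d⁄dX (ℚ⟦X⟧) v * Wf d) := by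
      rw [hdφ, hφv, mul_pow]; ring
    rw [hexp, map_add, PowerSeries.coeff_X_pow_mul', PowerSeries.coeff_X_pow_mul']
    rcases eq_or_lt_of_le hk with rfl | hlt
    · rw [if_pos le_rfl, if_neg (by omega), if_pos rfl, Nat.sub_self, add_zero]
      rw [hWinv k]
      simp [coeff_zero_eq_constantCoeff]
    · rw [if_pos hk, if_pos (by omega : k+1 ≤ d), if_neg (by omega : ¬ k = d)]
      set m := d - k with hm
      have hm1 : 1 ≤ m := by omega
      have hA2 : v^(k+1) * Wf d = u^m := by
        rw [hWu d, show d+1 = (k+1)+m from by omega]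
        calc v^(k+1) * u^((k+1)+m) = (v*u)^(k+1) * u^m := by ring
          _ = u^m := by rw [hvu, one_pow, one_mul]
      have hB2 : v^k * d⁄dX (ℚ⟦X⟧) v * Wf d = d⁄dX (ℚ⟦X⟧) v * u^(m+1) := by
        rw [hWu d, show d+1 = k+(m+1) from by omega]
        calc v^k * d⁄dX (ℚ⟦X⟧) v * u^(k+(m+1))
            = (v*u)^k * (d⁄dX (ℚ⟦X⟧) v * u^(m+1)) := by ring
          _ = d⁄dX (ℚ⟦X⟧) v * u^(m+1) := by rw [hvu, one_pow, one_mul]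
      rw [hA2, hB2, show d - (k+1) = m - 1 from by omega]
      have hc2 : ((m-1 : ℕ) : (ℚ⟦X⟧)⟦X⟧) + 1 = (m : (ℚ⟦X⟧)⟦X⟧) := by
        exact_mod_cast congrArg (Nat.cast (R := (ℚ⟦X⟧)⟦X⟧)) (show (m-1)+1 = m from by omega)
      have hdum : d⁄dX (ℚ⟦X⟧) (u^m)
          = -(m:(ℚ⟦X⟧)⟦X⟧) * (d⁄dX (ℚ⟦X⟧) v * u^(m+1)) := by
        have h1 := derivative_pow' u (m-1)
        rw [show (m-1)+1 = m from by omega, hc2, hdu] at h1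
        rw [h1, show m+1 = (m-1)+2 from by omega, pow_add]
        ring
      have hco := congrArg (coeff (R := ℚ⟦X⟧) (m-1)) hdum
      rw [PowerSeries.coeff_derivative, show m-1+1 = m from by omega] at hco
      have hrhs : coeff (R := ℚ⟦X⟧) (m-1) (-(m:(ℚ⟦X⟧)⟦X⟧) * (d⁄dX (ℚ⟦X⟧) v * u^(m+1)))
          = -((m:ℚ⟦X⟧) * coeff (R := ℚ⟦X⟧) (m-1) (d⁄dX (ℚ⟦X⟧) v * u^(m+1))) := by
        rw [neg_mul, map_neg,
          show ((m:(ℚ⟦X⟧)⟦X⟧)) = PowerSeries.C (R := ℚ⟦X⟧) ((m:ℚ⟦X⟧)) from by rw [map_natCast],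
          PowerSeries.coeff_C_mul]
      rw [hrhs] at hco
      have hmQ : ((m:ℚ⟦X⟧)) ≠ 0 := by
        intro hcon
        have h := congrArg (constantCoeff (R := ℚ)) hcon
        rw [map_natCast, map_zero] at h
        have : (m:ℚ) ≠ 0 := by exact_mod_cast (by omega : m ≠ 0)
        exact this h
      have hzero : (m:ℚ⟦X⟧) * (coeff (R := ℚ⟦X⟧) m (u^m)
          + coeff (R := ℚ⟦X⟧) (m-1) (d⁄dX (ℚ⟦X⟧) v * u^(m+1))) = 0 := by
        have hc3 : ((m-1 : ℕ) : ℚ⟦X⟧) + 1 = (m : ℚ⟦X⟧) := by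
          exact_mod_cast congrArg (Nat.cast (R := ℚ⟦X⟧)) (show (m-1)+1 = m from by omega)
        rw [hc3] at hco
        linear_combination hco
      rcases mul_eq_zero.mp hzero with h | h
      · exact absurd h hmQ
      · exact h
  have hmul : PowerSeries.substitute φ (d⁄dX (ℚ⟦X⟧) Xser) * (d⁄dX (ℚ⟦X⟧) φ * Wf d)
      = Wf d := by
    rw [← mul_assoc, hder, one_mul]
  have hcoeff := congrArg (coeff (R := ℚ⟦X⟧) d) hmul
  rw [coeff_substitute_mul hφ0] at hcoeff
  rw [Finset.sum_eq_single d
    (fun k hkmem hkne => by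
      rw [coeffk k (by simp only [Finset.mem_range] at hkmem; omega), if_neg hkne, mul_zero])
    (fun hmem => absurd (Finset.self_mem_range_succ d) hmem)] at hcoeff
  rw [coeffk d le_rfl, if_pos rfl, mul_one, PowerSeries.coeff_derivative] at hcoeff
  have hfinal := congrArg (coeff (R := ℚ) p) hcoeff
  rw [show ((d:ℚ⟦X⟧)+1) = PowerSeries.C (R := ℚ) ((d:ℚ)+1) from by rw [map_add, map_natCast, map_one],
    mul_comm (coeff (R := ℚ⟦X⟧) (d+1) Xser), PowerSeries.coeff_C_mul] at hfinal
  simp only [hWf, coeff_mk] at hfinal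
  have hgF : coeff (R := ℚ) d (g0^p) = coeff (R := ℚ) (d+p) (F^p) := by
    rw [hFg, mul_pow, PowerSeries.coeff_X_pow_mul]
  rw [hgF] at hfinal
  rw [hA (d+p) p]
  have hd1 : ((d:ℚ)+1) ≠ 0 := by positivity
  field_simp
  linear_combination hfinal
end

section
/- Let S2(n,m) := n!·[x^n]( (e^x − 1)^m / m! ) denote the Stirling numbers of the second kind. Then in ℚ[[t]] one has Σ_{m≥0} S2(m+3, m)·t^m = t·(1 + 8t + 6t^2)/(1 − t)^7; equivalently, (1 − t)^7 · Σ_{m≥0} S2(m+3,m)·t^m = t + 8t^2 + 6t^3. -/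
open PowerSeries

/-- The Stirling numbers of the second kind, `S2(n,m) = n!·[x^n]((e^x − 1)^m / m!)`. -/
noncomputable def stirling2 (n m : ℕ) : ℚ :=
  (n.factorial : ℚ) * coeff n ((exp ℚ - 1) ^ m) / m.factorial

private lemma derivative_exp_sub_one : d⁄dX ℚ (exp ℚ - 1) = exp ℚ := by
  have h1 : d⁄dX ℚ (1 : ℚ⟦X⟧) = 0 := Derivation.map_one_eq_zero _
  rw [map_sub, h1, sub_zero]
  ext n
  rw [coeff_derivative, coeff_exp, coeff_exp]
  simp [Nat.factorial_succ]
  field_simp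

private lemma coeff_rec (n m : ℕ) :
    coeff (R := ℚ) (n+1) ((exp ℚ - 1)^(m+1)) * (n+1)
      = (m+1) * (coeff (R := ℚ) n ((exp ℚ - 1)^(m+1)) + coeff (R := ℚ) n ((exp ℚ - 1)^m)) := by
  have h := Derivation.leibniz_pow (d⁄dX ℚ) (exp ℚ - 1) (m+1)
  rw [derivative_exp_sub_one, Nat.add_sub_cancel] at h
  have hmul : (exp ℚ - 1)^m • exp ℚ = (exp ℚ - 1)^(m+1) + (exp ℚ - 1)^m := by
    rw [smul_eq_mul]; ring
  rw [hmul] at h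
  have := congrArg (coeff n) h
  rw [coeff_derivative, map_nsmul, map_add] at this
  rw [this]
  ring

private lemma s2_rec (n m : ℕ) :
    stirling2 (n+1) (m+1) = (m+1) * stirling2 n (m+1) + stirling2 n m := by
  have h := coeff_rec n m
  unfold stirling2
  rw [Nat.factorial_succ n, Nat.factorial_succ m]
  have hn : (n.factorial : ℚ) ≠ 0 := by exact_mod_cast n.factorial_ne_zero
  have hm : (m.factorial : ℚ) ≠ 0 := by exact_mod_cast m.factorial_ne_zero
  have h1 : ((n:ℚ)+1) ≠ 0 := by positivity
  have h2 : ((m:ℚ)+1) ≠ 0 := by positivity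
  push_cast
  field_simp
  linear_combination h

private lemma s2_eq_zero {n m : ℕ} (h : n < m) : stirling2 n m = 0 := by
  have hX : (X : ℚ⟦X⟧) ∣ (exp ℚ - 1) := by
    rw [X_dvd_iff]; simp
  have hd : (X:ℚ⟦X⟧)^m ∣ (exp ℚ - 1)^m := pow_dvd_pow_of_dvd hX m
  have hc := X_pow_dvd_iff.mp hd n h
  unfold stirling2
  rw [hc]
  simp

private lemma s2_base (n : ℕ) : stirling2 n 0 = if n = 0 then 1 else 0 := by
  unfold stirling2
  rw [pow_zero, coeff_one]
  split_ifs with h <;> simp [h]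

private lemma diag0 (m : ℕ) : stirling2 m m = 1 := by
  induction m with
  | zero => simp [s2_base]
  | succ k ih =>
    rw [s2_rec k k, ih, s2_eq_zero (Nat.lt_succ_self k)]
    ring

private lemma diag1 (m : ℕ) : stirling2 (m+1) m = (m:ℚ)*(m+1)/2 := by
  induction m with
  | zero => simp [s2_base]
  | succ k ih =>
    rw [show k+1+1 = (k+1)+1 from rfl, s2_rec (k+1) k, ih, diag0]
    push_cast
    ring

private lemma diag2 (m : ℕ) : stirling2 (m+2) m = (m:ℚ)*(m+1)*(m+2)*(3*m+1)/24 := by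
  induction m with
  | zero => simp [s2_base]
  | succ k ih =>
    rw [show k+1+2 = (k+2)+1 from rfl, s2_rec (k+2) k, ih, diag1]
    push_cast
    ring

private lemma diag3 (m : ℕ) : stirling2 (m+3) m = (m:ℚ)^2*(m+1)^2*(m+2)*(m+3)/48 := by
  induction m with
  | zero => simp [s2_base]
  | succ k ih =>
    rw [show k+1+3 = (k+3)+1 from rfl, s2_rec (k+3) k, ih, diag2]
    push_cast
    ring

private lemma cast_choose_six (m : ℕ) :
    ((m+6).choose 6 : ℚ) = (m+1)*(m+2)*(m+3)*(m+4)*(m+5)*(m+6)/720 := by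
  have h := Nat.choose_mul_factorial_mul_factorial (show 6 ≤ m+6 by omega)
  rw [show m+6-6 = m from by omega] at h
  have hq := congrArg (Nat.cast : ℕ → ℚ) h
  push_cast at hq
  have hf : ((m+6).factorial : ℚ) = (m+6)*(m+5)*(m+4)*(m+3)*(m+2)*(m+1)*(m.factorial) := by
    simp [Nat.factorial_succ]; ring
  rw [hf] at hq
  have hm : (m.factorial : ℚ) ≠ 0 := by exact_mod_cast m.factorial_ne_zero
  have h720 : ((Nat.factorial 6 : ℕ) : ℚ) = 720 := by norm_num [Nat.factorial]
  rw [h720] at hq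
  have hq2 : ((m+6).choose 6 : ℚ) * 720 = (m+6)*(m+5)*(m+4)*(m+3)*(m+2)*(m+1) :=
    mul_right_cancel₀ hm (by linear_combination hq)
  field_simp
  linear_combination hq2

private lemma key (n : ℕ) :
    stirling2 (n+3) n = ((n+5).choose 6 : ℚ) + 8*((n+4).choose 6) + 6*((n+3).choose 6) := by
  rw [diag3 n]
  match n with
  | 0 => norm_num [Nat.choose]
  | 1 => norm_num [Nat.choose]
  | 2 => norm_num [Nat.choose]
  | (k+3) =>
    rw [show k+3+5 = (k+2)+6 from by omega, show k+3+4 = (k+1)+6 from by omega,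
      show k+3+3 = k+6 from by omega, cast_choose_six, cast_choose_six, cast_choose_six]
    push_cast
    ring

private lemma hmk_lemma :
    (PowerSeries.mk (fun m => stirling2 (m + 3) m) : ℚ⟦X⟧)
      = (X^1 + 8*X^2 + 6*X^3) * (invOneSubPow ℚ (6+1)).val := by
  rw [invOneSubPow_val_succ_eq_mk_add_choose]
  ext n
  rw [coeff_mk, key,
    show (8 : ℚ⟦X⟧) = C 8 from (map_ofNat _ 8).symm,
    show (6 : ℚ⟦X⟧) = C 6 from (map_ofNat _ 6).symm,
    add_mul, add_mul, map_add, map_add, mul_assoc, mul_assoc, coeff_C_mul, coeff_C_mul,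
    coeff_X_pow_mul', coeff_X_pow_mul', coeff_X_pow_mul']
  match n with
  | 0 => norm_num [Nat.choose]
  | 1 => norm_num [coeff_mk, Nat.choose]
  | 2 => norm_num [coeff_mk, Nat.choose]
  | (k+3) =>
    rw [if_pos (by omega : 1 ≤ k+3), if_pos (by omega : 2 ≤ k+3), if_pos (by omega : 3 ≤ k+3)]
    rw [show k+3-1 = k+2 from by omega, show k+3-2 = k+1 from by omega,
      show k+3-3 = k from by omega]
    simp only [coeff_mk]
    rw [show k+3+5 = 6+(k+2) from by omega, show k+3+4 = 6+(k+1) from by omega,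
      show k+3+3 = 6+k from by omega]

/-- The o.g.f. of the fourth (`d = 3`) diagonal of the Stirling2 triangle:
`Σ_m S2(m+3,m)·t^m = t(1 + 8t + 6t^2)/(1 − t)^7`, stated in the equivalent form
`(1 − t)^7 · Σ_m S2(m+3,m)·t^m = t + 8t^2 + 6t^3` in `ℚ[[t]]`. -/
theorem stirling2_diagonal_three_ogf :
    (1 - PowerSeries.X : ℚ⟦X⟧) ^ 7 * PowerSeries.mk (fun m => stirling2 (m + 3) m)
      = PowerSeries.X + 8 * PowerSeries.X ^ 2 + 6 * PowerSeries.X ^ 3 := by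
  have hu : (1 - X : ℚ⟦X⟧) ^ 7 * (invOneSubPow ℚ (6+1)).val = 1 := by
    have h := (invOneSubPow ℚ (6+1)).inv_val
    rwa [invOneSubPow_inv_eq_one_sub_pow, show (6+1 : ℕ) = 7 from rfl] at h
  rw [hmk_lemma, mul_left_comm, hu, mul_one, pow_one]
end

section
/- Let B(n,m) := n!·[x^n]( e^x·(e^x − 1)^m / m! ), i.e., B(n,m) = Σ_{k} binom(n,k)·S2(k,m) where S2 are the Stirling numbers of the second kind (entries of the Sheffer triangle (e^s, e^s − 1), the product of Pascal's triangle with the Stirling2 triangle). Then in ℚ[[t]] one has Σ_{m≥0} B(m+2, m)·t^m = (1 + 2t)/(1 − t)^5; equivalently, (1 − t)^5 · Σ_{m≥0} B(m+2,m)·t^m = 1 + 2t. -/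
open PowerSeries

/-- The entries of the Sheffer triangle `(e^s, e^s − 1)` (product of Pascal's triangle
with the Stirling2 triangle): `B(n,m) = n!·[x^n](e^x·(e^x − 1)^m / m!)`. -/
noncomputable def pascalStirling2 (n m : ℕ) : ℚ :=
  (n.factorial : ℚ) * coeff n (exp ℚ * (exp ℚ - 1) ^ m) / m.factorial

private noncomputable def psAux : ℚ⟦X⟧ := PowerSeries.mk fun n => 1 / (n + 1).factorial

private lemma psAux_exp : exp ℚ - 1 = X * psAux := by
  ext n
  cases n with
  | zero => simp [psAux]
  | succ n => simp [psAux, coeff_succ_X_mul, coeff_exp]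

private lemma coeff_two_mul' (φ ψ : ℚ⟦X⟧) :
    coeff 2 (φ * ψ) = constantCoeff φ * coeff 2 ψ + coeff 1 φ * coeff 1 ψ
      + coeff 2 φ * constantCoeff ψ := by
  rw [coeff_mul]
  have h : (Finset.HasAntidiagonal.antidiagonal 2 : Finset (ℕ × ℕ)) = {(0,2),(1,1),(2,0)} := rfl
  rw [h, Finset.sum_insert (by decide), Finset.sum_insert (by decide), Finset.sum_singleton]
  simp [coeff_zero_eq_constantCoeff]
  ring

private lemma psAux_c0 (m : ℕ) : constantCoeff (psAux ^ m) = 1 := by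
  rw [map_pow]
  simp [psAux, constantCoeff_mk]

private lemma psAux_c1 (m : ℕ) : coeff 1 (psAux ^ m) = m / 2 := by
  rw [coeff_one_pow]
  simp [psAux]
  ring

private lemma psAux_c2 (m : ℕ) :
    coeff 2 (psAux ^ m) = m / 6 + m * (m - 1) / 8 := by
  induction m with
  | zero => simp
  | succ m ih =>
    rw [pow_succ, coeff_two_mul', ih, psAux_c0, psAux_c1]
    simp [psAux]
    norm_num [Nat.factorial]
    ring

private lemma key_s9 (m : ℕ) : pascalStirling2 (m + 2) m =
    ((m : ℚ) + 2) * ((m : ℚ) + 1) *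
      ((m : ℚ) / 6 + (m : ℚ) * ((m : ℚ) - 1) / 8 + (m : ℚ) / 2 + 1 / 2) := by
  have h1 : exp ℚ * (exp ℚ - 1) ^ m = X ^ m * (exp ℚ * psAux ^ m) := by
    rw [psAux_exp, mul_pow]; ring
  have h2 : coeff (m + 2) (exp ℚ * (exp ℚ - 1) ^ m) = coeff 2 (exp ℚ * psAux ^ m) := by
    rw [h1, add_comm m 2, coeff_X_pow_mul]
  have h3 : coeff 2 (exp ℚ * psAux ^ m) =
      (m : ℚ) / 6 + (m : ℚ) * ((m : ℚ) - 1) / 8 + (m : ℚ) / 2 + 1 / 2 := by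
    rw [coeff_two_mul', psAux_c0, psAux_c1, psAux_c2]
    simp [coeff_exp, constantCoeff_exp]
  have hfac : ((m + 2).factorial : ℚ) = ((m : ℚ) + 2) * ((m : ℚ) + 1) * (m.factorial : ℚ) := by
    rw [Nat.factorial_succ, Nat.factorial_succ]
    push_cast
    ring
  have hm : (m.factorial : ℚ) ≠ 0 := Nat.cast_ne_zero.mpr m.factorial_ne_zero
  rw [pascalStirling2, h2, h3, hfac]
  field_simp

/-- The o.g.f. of the third (`d = 2`) diagonal of the Sheffer triangle `(e^s, e^s − 1)`:
`Σ_m B(m+2,m)·t^m = (1 + 2t)/(1 − t)^5`, stated in the equivalent form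
`(1 − t)^5 · Σ_m B(m+2,m)·t^m = 1 + 2t` in `ℚ[[t]]`. -/
theorem pascalStirling2_diagonal_two_ogf :
    (1 - PowerSeries.X : ℚ⟦X⟧) ^ 5 * PowerSeries.mk (fun m => pascalStirling2 (m + 2) m)
      = 1 + 2 * PowerSeries.X := by
  set f : ℕ → ℚ := fun m => pascalStirling2 (m + 2) m with hf
  have hL : (1 - X : ℚ⟦X⟧) ^ 5 * PowerSeries.mk f =
      PowerSeries.mk f - (5 : ℚ) • (X ^ 1 * PowerSeries.mk f)
        + (10 : ℚ) • (X ^ 2 * PowerSeries.mk f) - (10 : ℚ) • (X ^ 3 * PowerSeries.mk f)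
        + (5 : ℚ) • (X ^ 4 * PowerSeries.mk f) - X ^ 5 * PowerSeries.mk f := by
    simp only [smul_eq_C_mul, map_ofNat]
    ring
  have hR : (1 + 2 * X : ℚ⟦X⟧) = 1 + (2 : ℚ) • X := by
    simp only [smul_eq_C_mul, map_ofNat]
  ext n
  rw [hL, hR]
  simp only [map_sub, map_add, map_smul, coeff_X_pow_mul', coeff_mk, smul_eq_mul,
    coeff_one, coeff_X]
  rcases n with _ | _ | _ | _ | _ | k
  · norm_num [hf, key_s9]
  · norm_num [hf, key_s9]
  · norm_num [hf, key_s9]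
  · norm_num [hf, key_s9]
  · norm_num [hf, key_s9]
  · have h5 : ¬ (k + 5 = 0) := by omega
    have h1 : ¬ (k + 5 = 1) := by omega
    simp only [if_neg h5, if_neg h1, if_pos (by omega : 1 ≤ k + 5),
      if_pos (by omega : 2 ≤ k + 5), if_pos (by omega : 3 ≤ k + 5),
      if_pos (by omega : 4 ≤ k + 5), if_pos (by omega : 5 ≤ k + 5)]
    have e1 : k + 5 - 1 = k + 4 := by omega
    have e2 : k + 5 - 2 = k + 3 := by omega
    have e3 : k + 5 - 3 = k + 2 := by omega
    have e4 : k + 5 - 4 = k + 1 := by omega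
    have e5 : k + 5 - 5 = k := by omega
    rw [e1, e2, e3, e4, e5]
    simp only [hf, key_s9]
    push_cast
    ring
end

section
/- Let S(n,m) := n!·[x^n]( e^x·(e^{2x} − 1)^m / m! ) be the entries of the generalized Stirling2 Sheffer triangle S2[2,1] = (e^s, e^{2s} − 1). Then in ℚ[[t]] one has Σ_{m≥0} S(m+1, m)·t^m = (1 + 2t)/(1 − 2t)^3; equivalently, (1 − 2t)^3 · Σ_{m≥0} S(m+1,m)·t^m = 1 + 2t. -/
open PowerSeries

/-- The entries of the generalized Stirling2 Sheffer triangle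
`S2[2,1] = (e^s, e^{2s} − 1)`: `S(n,m) = n!·[x^n](e^x·(e^{2x} − 1)^m / m!)`. -/
noncomputable def genStirling2_21 (n m : ℕ) : ℚ :=
  (n.factorial : ℚ) * coeff n (exp ℚ * (rescale (2 : ℚ) (exp ℚ) - 1) ^ m) / m.factorial

noncomputable def g : ℚ⟦X⟧ := rescale (2:ℚ) (exp ℚ) - 1

lemma gcoeff (k : ℕ) : coeff k g = 2^k / k.factorial - if k = 0 then 1 else 0 := by
  simp [g, coeff_rescale, coeff_exp, coeff_one]
  ring

lemma hg0 : coeff 0 g = 0 := by simp [gcoeff]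
lemma hg1 : coeff 1 g = 2 := by simp [gcoeff]
lemma hg2 : coeff 2 g = 2 := by norm_num [gcoeff, Nat.factorial]

lemma hlt : ∀ m i, i < m → coeff i (g ^ m) = 0 := by
  intro m
  induction m with
  | zero => omega
  | succ m ih =>
    intro i hi
    rw [pow_succ, coeff_mul]
    apply Finset.sum_eq_zero
    rintro ⟨a, b⟩ hab
    have hab : a + b = i := Finset.HasAntidiagonal.mem_antidiagonal.mp hab
    rcases Nat.lt_or_ge a m with h | h
    · simp [ih a h]
    · have hb : b = 0 := by omega
      simp [hb, hg0]

lemma hA : ∀ m, coeff m (g ^ m) = 2 ^ m := by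
  intro m
  induction m with
  | zero => simp
  | succ m ih =>
    rw [pow_succ, coeff_mul, Finset.Nat.sum_antidiagonal_eq_sum_range_succ
      (fun a b => coeff a (g ^ m) * coeff b g)]
    rw [Finset.sum_range_succ, Finset.sum_range_succ]
    have h0 : ∀ a ∈ Finset.range m, coeff a (g ^ m) * coeff (m + 1 - a) g = 0 := by
      intro a ha
      rw [Finset.mem_range] at ha
      simp [hlt m a ha]
    rw [Finset.sum_eq_zero h0]
    simp [ih, hg0, hg1, pow_succ]

lemma hB : ∀ m, coeff (m+1) (g ^ m) = m * 2 ^ m := by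
  intro m
  induction m with
  | zero => simp
  | succ m ih =>
    rw [pow_succ, coeff_mul, Finset.Nat.sum_antidiagonal_eq_sum_range_succ
      (fun a b => coeff a (g ^ m) * coeff b g)]
    rw [Finset.sum_range_succ, Finset.sum_range_succ, Finset.sum_range_succ]
    have h0 : ∀ a ∈ Finset.range m, coeff a (g ^ m) * coeff (m + 2 - a) g = 0 := by
      intro a ha
      rw [Finset.mem_range] at ha
      simp [hlt m a ha]
    rw [Finset.sum_eq_zero h0]
    have e1 : m + 1 + 1 - m = 2 := by omega
    have e2 : m + 1 + 1 - (m + 1) = 1 := by omega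
    have e3 : m + 1 + 1 - (m + 2) = 0 := by omega
    simp only [e1, e2, e3]
    rw [hA m, ih, hg1, hg2, hg0]
    push_cast
    ring

lemma hC (m : ℕ) : coeff (m+1) (exp ℚ * g ^ m) = (m + 1) * 2 ^ m := by
  rw [coeff_mul, Finset.Nat.sum_antidiagonal_eq_sum_range_succ
    (fun a b => coeff a (exp ℚ) * coeff b (g ^ m))]
  rw [Finset.sum_range_succ', Finset.sum_range_succ']
  have h0 : ∀ a ∈ Finset.range m, coeff (a + 1 + 1) (exp ℚ)
      * coeff (m + 1 - (a + 1 + 1)) (g ^ m) = 0 := by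
    intro a ha
    rw [Finset.mem_range] at ha
    have h1 : m + 1 - (a + 1 + 1) = m - (a + 1) := by omega
    have h2 : m - (a + 1) < m := by omega
    rw [h1, hlt m _ h2, mul_zero]
  rw [Finset.sum_eq_zero h0]
  have e1 : m + 1 - (0 + 1) = m := by omega
  simp only [e1, Nat.sub_zero]
  rw [hA m, hB m, coeff_exp, coeff_exp]
  simp [Nat.factorial]
  ring

lemma hval (m : ℕ) : genStirling2_21 (m + 1) m = (m + 1)^2 * 2^m := by
  have : (rescale (2 : ℚ) (exp ℚ) - 1) = g := rfl
  rw [genStirling2_21, this, hC m]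
  have hf : (m.factorial : ℚ) ≠ 0 := by exact_mod_cast m.factorial_ne_zero
  rw [Nat.factorial_succ]
  push_cast
  field_simp

/-- The o.g.f. of the second (`d = 1`) diagonal of the triangle `S2[2,1]`:
`Σ_m S(m+1,m)·t^m = (1 + 2t)/(1 − 2t)^3`, stated in the equivalent form
`(1 − 2t)^3 · Σ_m S(m+1,m)·t^m = 1 + 2t` in `ℚ[[t]]`. -/
theorem genStirling2_21_diagonal_one_ogf :
    (1 - 2 * PowerSeries.X : ℚ⟦X⟧) ^ 3 * PowerSeries.mk (fun m => genStirling2_21 (m + 1) m)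
      = 1 + 2 * PowerSeries.X := by
  have hmk : PowerSeries.mk (fun m => genStirling2_21 (m + 1) m)
      = PowerSeries.mk (fun m : ℕ => ((m + 1)^2 * 2^m : ℚ)) := by
    ext n
    simp [hval]
  rw [hmk]
  set f : ℚ⟦X⟧ := PowerSeries.mk (fun m : ℕ => ((m + 1)^2 * 2^m : ℚ)) with hf
  have expand : (1 - 2 * PowerSeries.X : ℚ⟦X⟧) ^ 3 * f
      = f - 6 * (f * X) + 12 * (f * X^2) - 8 * (f * X^3) := by ring
  rw [expand]
  ext n
  have c1 : (6 : ℚ⟦X⟧) * (f * X) = f * X ^ 1 * (C (R := ℚ) 6) := by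
    rw [← map_ofNat (C : ℚ →+* ℚ⟦X⟧) 6]; ring
  have c2 : (12 : ℚ⟦X⟧) * (f * X ^ 2) = f * X ^ 2 * (C (R := ℚ) 12) := by
    rw [← map_ofNat (C : ℚ →+* ℚ⟦X⟧) 12]; ring
  have c3 : (8 : ℚ⟦X⟧) * (f * X ^ 3) = f * X ^ 3 * (C (R := ℚ) 8) := by
    rw [← map_ofNat (C : ℚ →+* ℚ⟦X⟧) 8]; ring
  rw [c1, c2, c3]
  have h2X : ∀ nn : ℕ, coeff nn (2 * X : ℚ⟦X⟧) = if nn = 1 then 2 else 0 := by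
    intro nn
    have : (2 : ℚ⟦X⟧) * X = X * (C (R := ℚ) 2) := by
      rw [← map_ofNat (C : ℚ →+* ℚ⟦X⟧) 2]; ring
    rw [this, PowerSeries.coeff_mul_C, coeff_X]
    split <;> simp
  simp only [map_sub, map_add, coeff_one, PowerSeries.coeff_mul_C,
    PowerSeries.coeff_mul_X_pow', h2X]
  rw [hf]
  simp only [coeff_mk]
  match n with
  | 0 => norm_num
  | 1 => norm_num
  | 2 => norm_num
  | (k+3) =>
    have e1 : k + 3 - 1 = k + 2 := by omega
    have e2 : k + 3 - 2 = k + 1 := by omega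
    have e3 : k + 3 - 3 = k := by omega
    rw [if_pos (by omega : 1 ≤ k + 3), if_pos (by omega : 2 ≤ k + 3),
      if_pos (by omega : 3 ≤ k + 3), if_neg (by omega : ¬ k + 3 = 0),
      if_neg (by omega : ¬ k + 3 = 1), e1, e2, e3]
    push_cast
    ring
end

section
/- Let S(n,m) := n!·[x^n]( e^x·(e^{2x} − 1)^m / m! ) be the entries of the generalized Stirling2 Sheffer triangle S2[2,1] = (e^s, e^{2s} − 1). Then in ℚ[[t]] one has Σ_{m≥0} S(m+2, m)·t^m = (1 + 16t + 12t^2)/(1 − 2t)^5; equivalently, (1 − 2t)^5 · Σ_{m≥0} S(m+2,m)·t^m = 1 + 16t + 12t^2. -/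
open PowerSeries

noncomputable def uu : ℚ⟦X⟧ := PowerSeries.mk fun k => 2 ^ (k + 1) / (k + 1).factorial

lemma X_mul_uu : (PowerSeries.X : ℚ⟦X⟧) * uu = rescale (2 : ℚ) (exp ℚ) - 1 := by
  ext n
  cases n with
  | zero =>
    have h : (constantCoeff) ((rescale 2) (exp ℚ)) = 1 := by
      rw [← coeff_zero_eq_constantCoeff_apply, coeff_rescale]; simp [coeff_exp]
    simp [uu, h]
  | succ n =>
    simp [uu, coeff_succ_X_mul, coeff_rescale, coeff_exp]
    ring

lemma coeff0_mul (f g : ℚ⟦X⟧) :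
    coeff 0 (f * g) = coeff 0 f * coeff 0 g := by
  simp [coeff_zero_eq_constantCoeff, map_mul]

lemma coeff1_mul (f g : ℚ⟦X⟧) :
    coeff 1 (f * g) = coeff 0 f * coeff 1 g + coeff 1 f * coeff 0 g := by
  rw [coeff_mul, Finset.Nat.sum_antidiagonal_eq_sum_range_succ_mk]
  simp [Finset.sum_range_succ]

lemma coeff2_mul (f g : ℚ⟦X⟧) :
    coeff 2 (f * g) = coeff 0 f * coeff 2 g + coeff 1 f * coeff 1 g
      + coeff 2 f * coeff 0 g := by
  rw [coeff_mul, Finset.Nat.sum_antidiagonal_eq_sum_range_succ_mk]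
  simp [Finset.sum_range_succ]

lemma uu0 : coeff 0 uu = 2 := by simp [uu]
lemma uu1 : coeff 1 uu = 2 := by norm_num [uu, Nat.factorial]
lemma uu2 : coeff 2 uu = 4 / 3 := by norm_num [uu, Nat.factorial]

lemma w0 (m : ℕ) : coeff 0 (uu ^ m) = 2 ^ m := by
  induction m with
  | zero => simp
  | succ m ih => rw [pow_succ, coeff0_mul, ih, uu0]; ring

lemma w1 (m : ℕ) : coeff 1 (uu ^ m) = m * 2 ^ m := by
  induction m with
  | zero => simp
  | succ m ih => rw [pow_succ, coeff1_mul, ih, w0, uu0, uu1]; push_cast; ring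

lemma w2 (m : ℕ) : coeff 2 (uu ^ m) = m * (3 * m + 1) / 6 * 2 ^ m := by
  induction m with
  | zero => simp
  | succ m ih => rw [pow_succ, coeff2_mul, ih, w0, w1, uu0, uu1, uu2]; push_cast; ring

lemma a_closed (m : ℕ) :
    genStirling2_21 (m + 2) m
      = 2 ^ m * (m + 2) * (m + 1) * (3 * m ^ 2 + 7 * m + 3) / 6 := by
  have hη : (rescale (2 : ℚ) (exp ℚ) - 1) ^ m = PowerSeries.X ^ m * uu ^ m := by
    rw [← X_mul_uu, mul_pow]
  have hc : coeff (m + 2) (exp ℚ * (rescale (2 : ℚ) (exp ℚ) - 1) ^ m)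
      = coeff 2 (exp ℚ * uu ^ m) := by
    rw [hη, mul_left_comm, add_comm, coeff_X_pow_mul]
  have h2 : coeff 2 (exp ℚ * uu ^ m)
      = coeff 0 (exp ℚ) * coeff 2 (uu ^ m) + coeff 1 (exp ℚ) * coeff 1 (uu ^ m)
        + coeff 2 (exp ℚ) * coeff 0 (uu ^ m) := coeff2_mul _ _
  have he0 : coeff 0 (exp ℚ) = 1 := by simp [coeff_exp]
  have he1 : coeff 1 (exp ℚ) = 1 := by norm_num [coeff_exp, Nat.factorial]
  have he2 : coeff 2 (exp ℚ) = 1 / 2 := by norm_num [coeff_exp, Nat.factorial]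
  have hfac : ((m + 2).factorial : ℚ) = (m + 2) * (m + 1) * m.factorial := by
    show ((m + 1 + 1).factorial : ℚ) = _
    rw [Nat.factorial_succ, Nat.factorial_succ]; push_cast; ring
  have hm : (m.factorial : ℚ) ≠ 0 := Nat.cast_ne_zero.2 m.factorial_ne_zero
  rw [genStirling2_21, hc, h2, he0, he1, he2, w0, w1, w2, hfac]
  field_simp
  ring

/-- The o.g.f. of the third (`d = 2`) diagonal of the triangle `S2[2,1]`:
`Σ_m S(m+2,m)·t^m = (1 + 16t + 12t^2)/(1 − 2t)^5`, stated in the equivalent form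
`(1 − 2t)^5 · Σ_m S(m+2,m)·t^m = 1 + 16t + 12t^2` in `ℚ[[t]]`. -/
theorem genStirling2_21_diagonal_two_ogf :
    (1 - 2 * PowerSeries.X : ℚ⟦X⟧) ^ 5 * PowerSeries.mk (fun m => genStirling2_21 (m + 2) m)
      = 1 + 16 * PowerSeries.X + 12 * PowerSeries.X ^ 2 := by
  set A : ℚ⟦X⟧ := PowerSeries.mk (fun m => genStirling2_21 (m + 2) m) with hA
  have e10 : (C 10) = (10 : ℚ⟦X⟧) := map_ofNat (C (R := ℚ)) 10
  have e40 : (C 40) = (40 : ℚ⟦X⟧) := map_ofNat (C (R := ℚ)) 40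
  have e80 : (C 80) = (80 : ℚ⟦X⟧) := map_ofNat (C (R := ℚ)) 80
  have e32 : (C 32) = (32 : ℚ⟦X⟧) := map_ofNat (C (R := ℚ)) 32
  have e16 : (C 16) = (16 : ℚ⟦X⟧) := map_ofNat (C (R := ℚ)) 16
  have e12 : (C 12) = (12 : ℚ⟦X⟧) := map_ofNat (C (R := ℚ)) 12
  have hq : (1 - 2 * PowerSeries.X : ℚ⟦X⟧) ^ 5 * A
      = A - C 10 * (X ^ 1 * A) + C 40 * (X ^ 2 * A) - C 80 * (X ^ 3 * A)
        + C 80 * (X ^ 4 * A) - C 32 * (X ^ 5 * A) := by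
    rw [e10, e40, e80, e32]; ring
  have hrhs : (1 + 16 * PowerSeries.X + 12 * PowerSeries.X ^ 2 : ℚ⟦X⟧)
      = 1 + C 16 * X ^ 1 + C 12 * X ^ 2 := by rw [e16, e12]; ring
  rw [hq, hrhs]
  ext n
  simp only [map_add, map_sub, coeff_C_mul, coeff_X_pow_mul', coeff_one, coeff_X, coeff_X_pow,
    hA, coeff_mk]
  obtain _ | _ | _ | _ | _ | m := n
  · norm_num [a_closed]
  · norm_num [a_closed]
  · norm_num [a_closed]
  · norm_num [a_closed]
  · norm_num [a_closed]
  · rw [if_pos (by omega : 1 ≤ m+1+1+1+1+1), if_pos (by omega : 2 ≤ m+1+1+1+1+1),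
      if_pos (by omega : 3 ≤ m+1+1+1+1+1), if_pos (by omega : 4 ≤ m+1+1+1+1+1),
      if_pos (by omega : 5 ≤ m+1+1+1+1+1),
      if_neg (by omega : ¬ (m+1+1+1+1+1 = 0)), if_neg (by omega : ¬ (m+1+1+1+1+1 = 1)),
      if_neg (by omega : ¬ (m+1+1+1+1+1 = 2)),
      show m+1+1+1+1+1 - 1 = m+4 by omega, show m+1+1+1+1+1 - 2 = m+3 by omega,
      show m+1+1+1+1+1 - 3 = m+2 by omega, show m+1+1+1+1+1 - 4 = m+1 by omega,
      show m+1+1+1+1+1 - 5 = m by omega]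
    rw [show m+1+1+1+1+1 = m+5 by omega]
    rw [a_closed (m+5), a_closed (m+4), a_closed (m+3), a_closed (m+2), a_closed (m+1),
      a_closed m]
    have p : ∀ k : ℕ, (2:ℚ) ^ (m + k) = 2 ^ m * 2 ^ k := fun k => pow_add 2 m k
    rw [p 5, p 4, p 3, p 2, p 1]
    push_cast
    ring
end

section
/- Let g(x) := Σ_{n≥0} binom(2n,n)·x^n/2^n (the formal series (1 − 2x)^{−1/2}) and f(x) := Σ_{n≥1} 2^{n−1}·x^n/n (the formal series −(1/2)·log(1 − 2x)), and let S(n,m) := n!·[x^n]( g(x)·f(x)^m / m! ) be the entries of the generalized signless Stirling1 Sheffer triangle (OEIS A028338). Then in ℚ[[t]] one has Σ_{m≥0} S(m+1, m)·t^m = (1 + t)/(1 − t)^3; equivalently, S(m+1, m) = (m+1)^2 for all m ≥ 0. -/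
open PowerSeries

/-- The formal power series `(1 − 2x)^{−1/2} = Σ_n binom(2n,n)·x^n/2^n` over `ℚ`. -/
noncomputable def gA028338 : ℚ⟦X⟧ :=
  PowerSeries.mk fun n => ((2 * n).choose n : ℚ) / 2 ^ n

/-- The formal power series `−(1/2)·log(1 − 2x) = Σ_{n≥1} 2^{n−1}·x^n/n` over `ℚ`. -/
noncomputable def fA028338 : ℚ⟦X⟧ :=
  PowerSeries.mk fun n => if n = 0 then 0 else (2 : ℚ) ^ (n - 1) / n

/-- The entries of the generalized signless Stirling1 Sheffer triangle A028338,
`((1 − 2s)^{−1/2}, −(1/2)log(1 − 2s))`: `S(n,m) = n!·[x^n](g(x)·f(x)^m / m!)`. -/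
noncomputable def A028338 (n m : ℕ) : ℚ :=
  (n.factorial : ℚ) * coeff n (gA028338 * fA028338 ^ m) / m.factorial

noncomputable def hAux : ℚ⟦X⟧ := PowerSeries.mk fun n => (2 : ℚ) ^ n / (n + 1)

lemma f_eq : fA028338 = PowerSeries.X * hAux := by
  ext n
  cases n with
  | zero => simp [fA028338, coeff_zero_X_mul]
  | succ k => simp [fA028338, hAux, coeff_succ_X_mul]

lemma coeff_one_mul (a b : ℚ⟦X⟧) :
    coeff 1 (a * b) = coeff 0 a * coeff 1 b + coeff 1 a * coeff 0 b := by
  rw [coeff_mul, Finset.Nat.sum_antidiagonal_eq_sum_range_succ_mk]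
  simp [Finset.sum_range_succ]

lemma h0 : coeff 0 hAux = 1 := by simp [hAux]
lemma h1 : coeff 1 hAux = 1 := by norm_num [hAux]

lemma hpow0 (m : ℕ) : coeff 0 (hAux ^ m) = 1 := by
  rw [coeff_zero_eq_constantCoeff_apply, map_pow]
  have := h0
  rw [coeff_zero_eq_constantCoeff_apply] at this
  rw [this, one_pow]

lemma hpow1 (m : ℕ) : coeff 1 (hAux ^ m) = m := by
  induction m with
  | zero => simp
  | succ k ih => rw [pow_succ, coeff_one_mul, hpow0, h1, ih, h0]; push_cast; ring

lemma diag (m : ℕ) : A028338 (m + 1) m = ((m : ℚ) + 1) ^ 2 := by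
  have key : coeff (m + 1) (gA028338 * fA028338 ^ m) = m + 1 := by
    rw [f_eq, mul_pow, ← mul_assoc, mul_comm gA028338, mul_assoc, add_comm m 1,
      coeff_X_pow_mul, coeff_one_mul, hpow0, hpow1]
    have g0 : coeff 0 gA028338 = 1 := by simp [gA028338]
    have g1 : coeff 1 gA028338 = 1 := by norm_num [gA028338]
    rw [g0, g1]; ring
  rw [A028338, key, Nat.factorial_succ]
  have : (m.factorial : ℚ) ≠ 0 := Nat.cast_ne_zero.mpr m.factorial_ne_zero
  push_cast
  field_simp

/-- The o.g.f. of the second (`d = 1`) diagonal of the triangle A028338: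
`Σ_m S(m+1,m)·t^m = (1 + t)/(1 − t)^3`, equivalently `S(m+1,m) = (m+1)^2` for all
`m ≥ 0` (the squares, A000290). -/
theorem A028338_diagonal_one_ogf :
    (1 - PowerSeries.X : ℚ⟦X⟧) ^ 3 * PowerSeries.mk (fun m => A028338 (m + 1) m)
        = 1 + PowerSeries.X
      ∧ ∀ m : ℕ, A028338 (m + 1) m = ((m : ℚ) + 1) ^ 2 := by
  refine ⟨?_, diag⟩
  have hm : PowerSeries.mk (fun m => A028338 (m + 1) m)
      = PowerSeries.mk (fun m => ((m : ℚ) + 1) ^ 2) := by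
    ext n; simp [diag]
  rw [hm]
  have h3 : (C 3) = (3 : ℚ⟦X⟧) := by simp [map_ofNat]
  have hexp : (1 - PowerSeries.X : ℚ⟦X⟧) ^ 3
      = 1 - C 3 * X ^ 1 + C 3 * X ^ 2 - X ^ 3 := by rw [h3]; ring
  rw [hexp]
  ext n
  simp only [sub_mul, add_mul, one_mul, mul_assoc, map_sub, map_add, coeff_C_mul,
    coeff_X_pow_mul', coeff_mk, map_one, coeff_one]
  rcases n with _ | _ | _ | k
  · norm_num
  · norm_num
  · norm_num [coeff_X]
  · have e1 : k + 3 - 1 = k + 2 := by omega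
    have e2 : k + 3 - 2 = k + 1 := by omega
    have e3 : k + 3 - 3 = k := by omega
    norm_num [coeff_X, e1, e2, e3]
    ring
end

section
/- For every integer d ≥ 0, in ℚ[[t]] one has Σ_{m≥0} binom(d+m, m)^2 · t^m = ( Σ_{k=0}^{d} binom(d,k)^2 · t^k )/(1 − t)^{2d+1}; equivalently, (1 − t)^{2d+1} · Σ_{m≥0} binom(d+m,m)^2 · t^m = Σ_{k=0}^{d} binom(d,k)^2 · t^k. -/
open Finset PowerSeries

-- Vandermonde over range
lemma vand_range (a b n : ℕ) :
    (a + b).choose n = ∑ i ∈ range (n + 1), a.choose i * b.choose (n - i) := by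
  rw [Nat.add_choose_eq, Finset.Nat.sum_antidiagonal_eq_sum_range_succ_mk]

-- trinomial revision
lemma trinom (n k i : ℕ) :
    n.choose k * (n - k).choose i = n.choose i * (n - i).choose k := by
  by_cases h : k + i ≤ n
  · have h1 : k ≤ n := le_trans (Nat.le_add_right _ _) h
    have h2 : i ≤ n := le_trans (Nat.le_add_left _ _) h
    have e1 := Nat.choose_mul (n := n) (Nat.le_add_left i k)   -- C(n,k+i)*C(k+i,i) = C(n,i)*C(n-i,k+i-i)
    have e2 := Nat.choose_mul (n := n) (Nat.le_add_right k i)  -- C(n,k+i)*C(k+i,k) = C(n,k)*C(n-k,i)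
    rw [Nat.add_sub_cancel] at e1
    rw [Nat.add_sub_cancel_left] at e2
    rw [← e2, ← e1, Nat.choose_symm_add]
  · push_neg at h
    by_cases hk : k ≤ n
    · have : n - k < i := by omega
      rw [Nat.choose_eq_zero_of_lt this]
      by_cases hi : i ≤ n
      · have : n - i < k := by omega
        rw [Nat.choose_eq_zero_of_lt this]; ring
      · rw [Nat.choose_eq_zero_of_lt (by omega : n < i)]; ring
    · rw [Nat.choose_eq_zero_of_lt (by omega : n < k),
        Nat.choose_eq_zero_of_lt (show n - i < k by omega)]
      ring

-- inner sum: Σ_k C(d,k)² C(d-k,i) = C(d,i)·C(2d-i,d)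
lemma lemB (d i : ℕ) :
    ∑ k ∈ range (d + 1), d.choose k ^ 2 * (d - k).choose i
      = d.choose i * (2 * d - i).choose d := by
  by_cases hi : i ≤ d
  swap
  · rw [Nat.choose_eq_zero_of_lt (by omega : d < i), Nat.zero_mul]
    apply Finset.sum_eq_zero
    intro k hk
    rw [Nat.choose_eq_zero_of_lt (by omega : d - k < i)]
    ring
  have step : ∀ k ∈ range (d + 1),
      d.choose k ^ 2 * (d - k).choose i
        = d.choose i * ((d - i).choose k * d.choose (d - k)) := by
    intro k hk
    have hk' : k ≤ d := by simpa [Nat.lt_succ_iff] using hk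
    rw [Nat.choose_symm hk']
    have := trinom d k i
    calc d.choose k ^ 2 * (d - k).choose i
        = (d.choose k * (d - k).choose i) * d.choose k := by ring
      _ = (d.choose i * (d - i).choose k) * d.choose k := by rw [this]
      _ = d.choose i * ((d - i).choose k * d.choose k) := by ring
  rw [Finset.sum_congr rfl step, ← Finset.mul_sum]
  congr 1
  · rw [← vand_range]
    congr 1
    omega

-- main nat identity
lemma lemA (d m : ℕ) :
    ∑ k ∈ range (m + 1), d.choose k ^ 2 * (2 * d + (m - k)).choose (2 * d)
      = (d + m).choose d ^ 2 := by
  have step1 : ∀ k ∈ range (m + 1),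
      d.choose k ^ 2 * (2 * d + (m - k)).choose (2 * d)
        = ∑ i ∈ range (2 * d + 1),
            d.choose k ^ 2 * ((d - k).choose i * (d + m).choose (2 * d - i)) := by
    intro k hk
    have hkm : k ≤ m := by simpa [Nat.lt_succ_iff] using hk
    by_cases hkd : k ≤ d
    · have h : 2 * d + (m - k) = (d - k) + (d + m) := by omega
      rw [h, vand_range, Finset.mul_sum]
    · rw [Nat.choose_eq_zero_of_lt (by omega : d < k)]
      simp
  rw [Finset.sum_congr rfl step1, Finset.sum_comm]
  have step2 : ∀ i ∈ range (2 * d + 1),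
      (∑ k ∈ range (m + 1),
          d.choose k ^ 2 * ((d - k).choose i * (d + m).choose (2 * d - i)))
        = d.choose i * ((d + m).choose d * m.choose (d - i)) := by
    intro i _
    have rearr : ∀ k, d.choose k ^ 2 * ((d - k).choose i * (d + m).choose (2 * d - i))
        = (d.choose k ^ 2 * (d - k).choose i) * (d + m).choose (2 * d - i) := by
      intro k; ring
    simp_rw [rearr]
    rw [← Finset.sum_mul]
    by_cases hA : d ≤ m + i
    · have claim : ∑ k ∈ range (m + 1), d.choose k ^ 2 * (d - k).choose i
          = ∑ k ∈ range (d + 1), d.choose k ^ 2 * (d - k).choose i := by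
        have e1 : ∑ k ∈ range (m + 1), d.choose k ^ 2 * (d - k).choose i
            = ∑ k ∈ range (max d m + 1), d.choose k ^ 2 * (d - k).choose i := by
          apply Finset.sum_subset
          · exact Finset.range_subset_range.mpr (by omega)
          · intro k _ hkn
            have hkm : m < k := by
              simp only [Finset.mem_range, Nat.lt_succ_iff, not_le] at hkn ⊢; omega
            by_cases hkd : k ≤ d
            · rw [Nat.choose_eq_zero_of_lt (by omega : d - k < i)]; ring
            · rw [Nat.choose_eq_zero_of_lt (by omega : d < k)]; ring
        have e2 : ∑ k ∈ range (d + 1), d.choose k ^ 2 * (d - k).choose i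
            = ∑ k ∈ range (max d m + 1), d.choose k ^ 2 * (d - k).choose i := by
          apply Finset.sum_subset
          · exact Finset.range_subset_range.mpr (by omega)
          · intro k _ hkn
            have : d < k := by
              simp only [Finset.mem_range, Nat.lt_succ_iff, not_le] at hkn; omega
            rw [Nat.choose_eq_zero_of_lt this]; ring
        rw [e1, e2]
      rw [claim, lemB]
      by_cases hi : i ≤ d
      · have hmul := Nat.choose_mul (n := d + m)
          (show d ≤ 2 * d - i by omega)
        have h1 : d + m - d = m := by omega
        have h2 : 2 * d - i - d = d - i := by omega
        rw [h1, h2] at hmul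
        calc d.choose i * (2 * d - i).choose d * (d + m).choose (2 * d - i)
            = d.choose i * ((d + m).choose (2 * d - i) * (2 * d - i).choose d) := by ring
          _ = d.choose i * ((d + m).choose d * m.choose (d - i)) := by rw [hmul]
      · rw [Nat.choose_eq_zero_of_lt (by omega : d < i)]; ring
    · have h0 : (d + m).choose (2 * d - i) = 0 :=
        Nat.choose_eq_zero_of_lt (by omega : d + m < 2 * d - i)
      have h0' : m.choose (d - i) = 0 :=
        Nat.choose_eq_zero_of_lt (by omega : m < d - i)
      rw [h0, h0']; ring
  rw [Finset.sum_congr rfl step2]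
  have trim : ∑ i ∈ range (d + 1), d.choose i * ((d + m).choose d * m.choose (d - i))
      = ∑ i ∈ range (2 * d + 1), d.choose i * ((d + m).choose d * m.choose (d - i)) := by
    apply Finset.sum_subset
    · exact Finset.range_subset_range.mpr (by omega)
    · intro i _ hin
      have : d < i := by
        simp only [Finset.mem_range, Nat.lt_succ_iff, not_le] at hin; omega
      rw [Nat.choose_eq_zero_of_lt this]; ring
  rw [← trim]
  have : ∀ i ∈ range (d + 1), d.choose i * ((d + m).choose d * m.choose (d - i))
      = (d + m).choose d * (d.choose i * m.choose (d - i)) := by intro i _; ring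
  rw [Finset.sum_congr rfl this, ← Finset.mul_sum, ← vand_range, sq]

lemma lemA' (d n : ℕ) :
    ∑ k ∈ range (d + 1),
        (if k ≤ n then d.choose k ^ 2 * (2 * d + (n - k)).choose (2 * d) else 0)
      = (d + n).choose n ^ 2 := by
  have e1 : ∑ k ∈ range (d + 1),
        (if k ≤ n then d.choose k ^ 2 * (2 * d + (n - k)).choose (2 * d) else 0)
      = ∑ k ∈ range (max d n + 1),
        (if k ≤ n then d.choose k ^ 2 * (2 * d + (n - k)).choose (2 * d) else 0) := by
    apply Finset.sum_subset (Finset.range_subset_range.mpr (by omega))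
    intro k _ hk
    have hd : d < k := by
      simp only [Finset.mem_range, Nat.lt_succ_iff, not_le] at hk; omega
    rw [Nat.choose_eq_zero_of_lt hd]
    simp
  have e2 : ∑ k ∈ range (n + 1), d.choose k ^ 2 * (2 * d + (n - k)).choose (2 * d)
      = ∑ k ∈ range (max d n + 1),
        (if k ≤ n then d.choose k ^ 2 * (2 * d + (n - k)).choose (2 * d) else 0) := by
    rw [← Finset.sum_filter,
      show (range (max d n + 1)).filter (fun k => k ≤ n) = range (n+1) by
        ext k; simp [Nat.lt_succ_iff]; omega]
  rw [e1, ← e2, lemA, Nat.choose_symm_add]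

/-- **O.g.f.s of the diagonals of the squared Pascal triangle A008459.**
For every `d ≥ 0`, in `ℚ[[t]]` one has
`Σ_{m≥0} binom(d+m,m)^2·t^m = (Σ_{k=0}^{d} binom(d,k)^2·t^k)/(1 − t)^{2d+1}`,
stated in the equivalent multiplied form
`(1 − t)^{2d+1}·Σ_{m≥0} binom(d+m,m)^2·t^m = Σ_{k=0}^{d} binom(d,k)^2·t^k`. -/
theorem pascal_squared_diagonal_ogf (d : ℕ) :
    (1 - PowerSeries.X : ℚ⟦X⟧) ^ (2 * d + 1) *
        PowerSeries.mk (fun m => (((d + m).choose m : ℚ)) ^ 2)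
      = ∑ k ∈ Finset.range (d + 1),
          PowerSeries.C ((d.choose k : ℚ) ^ 2) * PowerSeries.X ^ k := by
  set g : ℚ⟦X⟧ := PowerSeries.mk fun n => ((2 * d + n).choose (2 * d) : ℚ) with hg
  have hunit : g * ((1 - PowerSeries.X : ℚ⟦X⟧) ^ (2 * d + 1)) = 1 :=
    PowerSeries.mk_add_choose_mul_one_sub_pow_eq_one ℚ (2 * d)
  suffices h : PowerSeries.mk (fun m => (((d + m).choose m : ℚ)) ^ 2)
      = (∑ k ∈ Finset.range (d + 1),
          PowerSeries.C ((d.choose k : ℚ) ^ 2) * PowerSeries.X ^ k) * g by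
    rw [h, mul_comm ((1 - PowerSeries.X : ℚ⟦X⟧) ^ (2 * d + 1)), mul_assoc, hunit, mul_one]
  ext n
  rw [PowerSeries.coeff_mk, Finset.sum_mul, map_sum]
  have term : ∀ k ∈ range (d + 1),
      (PowerSeries.coeff n) (PowerSeries.C ((d.choose k : ℚ) ^ 2) * PowerSeries.X ^ k * g)
        = ((if k ≤ n then d.choose k ^ 2 * (2 * d + (n - k)).choose (2 * d) else 0 : ℕ) : ℚ) := by
    intro k _
    rw [mul_assoc, mul_comm (PowerSeries.X ^ k) g, ← mul_assoc,
      PowerSeries.coeff_mul_X_pow', PowerSeries.coeff_C_mul, PowerSeries.coeff_mk]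
    split
    · push_cast; ring
    · simp
  rw [Finset.sum_congr rfl term, ← Nat.cast_sum, lemA']
  push_cast
  ring
end

section
/- For every integer d ≥ 1, in ℚ[[t]] one has Σ_{m≥0} binom(d+m, m)·binom(d+m+1, m+1)·t^m = ( (d+1)·Σ_{k=1}^{d} N(d,k)·t^{k−1} )/(1 − t)^{2d+1}, where N(d,k) = (1/d)·binom(d,k)·binom(d,k−1) are the Narayana numbers; equivalently, (1 − t)^{2d+1} · Σ_{m≥0} binom(d+m,m)·binom(d+m+1,m+1)·t^m = ((d+1)/d)·Σ_{k=1}^{d} binom(d,k)·binom(d,k−1)·t^{k−1}. -/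
open PowerSeries Finset

/-- Telescoping certificate. -/
private noncomputable def gcert (d m k : ℕ) : ℚ :=
  (k : ℚ) * ((k : ℚ) - 1) * (d.choose k : ℚ) * (d.choose (k - 1) : ℚ) *
    (if k ≤ m + 2 then ((2 * d + (m + 2 - k)).choose (2 * d) : ℚ) else 0)

private lemma a_rec (d m : ℕ) :
    ((m : ℚ) + 1) * ((m : ℚ) + 2) *
      (((d + (m + 1)).choose (m + 1) : ℚ) * ((d + (m + 1) + 1).choose (m + 1 + 1) : ℚ))
    = ((d : ℚ) + m + 1) * ((d : ℚ) + m + 2) *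
      (((d + m).choose m : ℚ) * ((d + m + 1).choose (m + 1) : ℚ)) := by
  have h1 : ((d + m + 1 : ℕ) : ℚ) * ((d + m).choose m : ℚ)
      = ((d + m + 1).choose (m + 1) : ℚ) * ((m : ℚ) + 1) := by
    exact_mod_cast congrArg (Nat.cast : ℕ → ℚ) (Nat.add_one_mul_choose_eq (d + m) m)
  have h2 : ((d + m + 2 : ℕ) : ℚ) * ((d + m + 1).choose (m + 1) : ℚ)
      = ((d + m + 2).choose (m + 2) : ℚ) * ((m : ℚ) + 2) := by
    exact_mod_cast congrArg (Nat.cast : ℕ → ℚ) (Nat.add_one_mul_choose_eq (d + m + 1) (m + 1))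
  have e2 : d + (m + 1) + 1 = d + m + 2 := by omega
  have e1 : d + (m + 1) = d + m + 1 := by omega
  have e3 : m + 1 + 1 = m + 2 := by omega
  rw [e2, e1, e3]
  push_cast at h1 h2
  linear_combination (-((m : ℚ) + 1) * ((d + m + 1).choose (m + 1) : ℚ)) * h2
    - (((d : ℚ) + m + 2) * ((d + m + 1).choose (m + 1) : ℚ)) * h1

private lemma per_term (d m k : ℕ) (hk : 1 ≤ k) (hkd : k ≤ d) :
    ((m : ℚ) + 1) * ((m : ℚ) + 2) *
        ((d.choose k : ℚ) * (d.choose (k - 1) : ℚ) *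
          (if k - 1 ≤ m + 1 then ((2 * d + (m + 1 - (k - 1))).choose (2 * d) : ℚ) else 0))
      - ((d : ℚ) + m + 1) * ((d : ℚ) + m + 2) *
        ((d.choose k : ℚ) * (d.choose (k - 1) : ℚ) *
          (if k - 1 ≤ m then ((2 * d + (m - (k - 1))).choose (2 * d) : ℚ) else 0))
    = gcert d m k - gcert d m (k + 1) := by
  unfold gcert
  rcases le_or_gt k (m + 1) with h | h
  · obtain ⟨j, hj⟩ : ∃ j, m + 1 = k + j := ⟨m + 1 - k, by omega⟩
    rw [if_pos (by omega : k - 1 ≤ m + 1), if_pos (by omega : k - 1 ≤ m),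
        if_pos (by omega : k ≤ m + 2), if_pos (by omega : k + 1 ≤ m + 2)]
    have e1 : m + 1 - (k - 1) = j + 1 := by omega
    have e2 : m - (k - 1) = j := by omega
    have e3 : m + 2 - k = j + 1 := by omega
    have e4 : m + 2 - (k + 1) = j := by omega
    have e5 : k + 1 - 1 = k := by omega
    rw [e1, e2, e3, e4, e5]
    have e6 : 2 * d + (j + 1) = 2 * d + j + 1 := by omega
    rw [e6]
    have hm : (m : ℚ) = (k : ℚ) + (j : ℚ) - 1 := by
      have h0 : ((m : ℚ) + 1) = (k : ℚ) + j := by exact_mod_cast congrArg (Nat.cast : ℕ → ℚ) hj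
      linarith
    have r1 : ((2 * d + j).choose (2 * d) : ℚ) * (2 * (d : ℚ) + j + 1)
        = ((2 * d + j + 1).choose (2 * d) : ℚ) * ((j : ℚ) + 1) := by
      have h0 := Nat.choose_mul_succ_eq (2 * d + j) (2 * d)
      have h1 : 2 * d + j + 1 - 2 * d = j + 1 := by omega
      rw [h1] at h0
      have h2 := congrArg (Nat.cast : ℕ → ℚ) h0
      push_cast at h2
      linarith
    have hdk : ((d - k : ℕ) : ℚ) = (d : ℚ) - k := by
      rw [Nat.cast_sub hkd]
    have r2 : ((d.choose (k + 1)) : ℚ) * ((k : ℚ) + 1)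
        = (d.choose k : ℚ) * ((d : ℚ) - k) := by
      have h0 := congrArg (Nat.cast : ℕ → ℚ) (Nat.choose_succ_right_eq d k)
      rw [Nat.cast_mul, Nat.cast_mul, hdk] at h0
      push_cast at h0
      linarith
    have r3 : (d.choose k : ℚ) * (k : ℚ)
        = (d.choose (k - 1) : ℚ) * ((d : ℚ) - k + 1) := by
      have h0 := Nat.choose_succ_right_eq d (k - 1)
      have e : k - 1 + 1 = k := by omega
      rw [e] at h0
      have h1 : ((d - (k - 1) : ℕ) : ℚ) = (d : ℚ) - k + 1 := by
        rw [Nat.cast_sub (by omega)]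
        rw [Nat.cast_sub hk]
        push_cast
        ring
      have h2 := congrArg (Nat.cast : ℕ → ℚ) h0
      rw [Nat.cast_mul, Nat.cast_mul, h1] at h2
      linarith
    push_cast
    rw [hm]
    linear_combination (-(2 * (k : ℚ) + j) * (d.choose k : ℚ) * (d.choose (k - 1) : ℚ)) * r1
      + ((k : ℚ) * (d.choose k : ℚ) * ((2 * d + j).choose (2 * d) : ℚ)) * r2
      + (((d : ℚ) - k) * (d.choose k : ℚ) * ((2 * d + j).choose (2 * d) : ℚ)) * r3
  · by_cases h2 : k = m + 2
    · subst h2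
      rw [if_pos (by omega : m + 2 - 1 ≤ m + 1), if_neg (by omega : ¬ m + 2 - 1 ≤ m),
          if_pos (by omega : m + 2 ≤ m + 2), if_neg (by omega : ¬ m + 2 + 1 ≤ m + 2)]
      have e1 : m + 1 - (m + 2 - 1) = 0 := by omega
      have e2 : m + 2 - (m + 2) = 0 := by omega
      rw [e1, e2]
      simp only [Nat.add_zero, Nat.choose_self]
      push_cast
      ring
    · rw [if_neg (by omega : ¬ k - 1 ≤ m + 1), if_neg (by omega : ¬ k - 1 ≤ m),
          if_neg (by omega : ¬ k ≤ m + 2), if_neg (by omega : ¬ k + 1 ≤ m + 2)]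
      ring

private lemma sum_rec (d m : ℕ) (hd : 1 ≤ d) :
    ((m : ℚ) + 1) * ((m : ℚ) + 2) *
      (∑ k ∈ Icc 1 d, (d.choose k : ℚ) * (d.choose (k - 1) : ℚ) *
        (if k - 1 ≤ m + 1 then ((2 * d + (m + 1 - (k - 1))).choose (2 * d) : ℚ) else 0))
    = ((d : ℚ) + m + 1) * ((d : ℚ) + m + 2) *
      (∑ k ∈ Icc 1 d, (d.choose k : ℚ) * (d.choose (k - 1) : ℚ) *
        (if k - 1 ≤ m then ((2 * d + (m - (k - 1))).choose (2 * d) : ℚ) else 0)) := by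
  rw [Finset.mul_sum, Finset.mul_sum, ← sub_eq_zero, ← Finset.sum_sub_distrib]
  have hterm : ∀ k ∈ Icc 1 d,
      ((m : ℚ) + 1) * ((m : ℚ) + 2) *
        ((d.choose k : ℚ) * (d.choose (k - 1) : ℚ) *
          (if k - 1 ≤ m + 1 then ((2 * d + (m + 1 - (k - 1))).choose (2 * d) : ℚ) else 0))
      - ((d : ℚ) + m + 1) * ((d : ℚ) + m + 2) *
        ((d.choose k : ℚ) * (d.choose (k - 1) : ℚ) *
          (if k - 1 ≤ m then ((2 * d + (m - (k - 1))).choose (2 * d) : ℚ) else 0))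
      = gcert d m k - gcert d m (k + 1) := by
    intro k hk
    rw [Finset.mem_Icc] at hk
    exact per_term d m k hk.1 hk.2
  rw [Finset.sum_congr rfl hterm]
  have htel : ∑ k ∈ Icc 1 d, (gcert d m k - gcert d m (k + 1))
      = gcert d m 1 - gcert d m (d + 1) := by
    rw [← Finset.Ico_add_one_right_eq_Icc, Finset.sum_Ico_eq_sum_range]
    have : d + 1 - 1 = d := by omega
    rw [this]
    have := Finset.sum_range_sub' (fun i => gcert d m (1 + i)) d
    simpa only [← Nat.add_assoc, Nat.add_comm 1 d, Nat.add_zero] using this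
  rw [htel]
  have h1 : gcert d m 1 = 0 := by simp [gcert]
  have h2 : gcert d m (d + 1) = 0 := by
    simp [gcert, Nat.choose_succ_self]
  rw [h1, h2, sub_zero]

/-- **O.g.f.s of the diagonals of Pascal times A135278 and the Narayana triangle.**
For every `d ≥ 1`, in `ℚ[[t]]` one has
`Σ_{m≥0} binom(d+m,m)·binom(d+m+1,m+1)·t^m
  = ((d+1)·Σ_{k=1}^{d} N(d,k)·t^{k−1})/(1 − t)^{2d+1}`,
with `N(d,k) = (1/d)·binom(d,k)·binom(d,k−1)` the Narayana numbers; stated in the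
equivalent multiplied form `(1 − t)^{2d+1}·Σ_{m≥0} binom(d+m,m)·binom(d+m+1,m+1)·t^m
  = ((d+1)/d)·Σ_{k=1}^{d} binom(d,k)·binom(d,k−1)·t^{k−1}`. -/
theorem pascal_times_A135278_diagonal_ogf (d : ℕ) (hd : 1 ≤ d) :
    (1 - PowerSeries.X : ℚ⟦X⟧) ^ (2 * d + 1) *
        PowerSeries.mk (fun m =>
          ((d + m).choose m : ℚ) * ((d + m + 1).choose (m + 1) : ℚ))
      = PowerSeries.C (R := ℚ) (((d : ℚ) + 1) / d) *
          ∑ k ∈ Finset.Icc 1 d,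
            PowerSeries.C (R := ℚ) ((d.choose k : ℚ) * (d.choose (k - 1) : ℚ))
              * PowerSeries.X ^ (k - 1) := by
  have hd0 : (d : ℚ) ≠ 0 := Nat.cast_ne_zero.mpr (by omega)
  set q : ℚ := ((d : ℚ) + 1) / d with hq
  set N : ℚ⟦X⟧ := PowerSeries.C (R := ℚ) q *
      ∑ k ∈ Finset.Icc 1 d,
        PowerSeries.C (R := ℚ) ((d.choose k : ℚ) * (d.choose (k - 1) : ℚ))
          * PowerSeries.X ^ (k - 1) with hN
  set I : ℚ⟦X⟧ := PowerSeries.mk fun n => ((2 * d + n).choose (2 * d) : ℚ) with hI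
  have hIinv : I * (1 - PowerSeries.X : ℚ⟦X⟧) ^ (2 * d + 1) = 1 := by
    exact PowerSeries.mk_add_choose_mul_one_sub_pow_eq_one ℚ (2 * d)
  -- coefficient formula for N * I
  have hco : ∀ m : ℕ, (PowerSeries.coeff (R := ℚ) m) (N * I)
      = q * ∑ k ∈ Icc 1 d, (d.choose k : ℚ) * (d.choose (k - 1) : ℚ) *
          (if k - 1 ≤ m then ((2 * d + (m - (k - 1))).choose (2 * d) : ℚ) else 0) := by
    intro m
    have hNI : N * I = PowerSeries.C (R := ℚ) q *
        ∑ k ∈ Finset.Icc 1 d,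
          PowerSeries.C (R := ℚ) ((d.choose k : ℚ) * (d.choose (k - 1) : ℚ))
            * (I * PowerSeries.X ^ (k - 1)) := by
      rw [hN, mul_assoc, Finset.sum_mul]
      congr 1
      refine Finset.sum_congr rfl fun k _ => ?_
      ring
    rw [hNI, PowerSeries.coeff_C_mul, map_sum]
    congr 1
    refine Finset.sum_congr rfl fun k _ => ?_
    rw [PowerSeries.coeff_C_mul, PowerSeries.coeff_mul_X_pow', hI]
    split_ifs with h
    · rw [PowerSeries.coeff_mk]
    · rw [mul_zero]
  -- coefficients of N * I agree with the mk series
  have hmk : PowerSeries.mk (fun m =>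
        ((d + m).choose m : ℚ) * ((d + m + 1).choose (m + 1) : ℚ)) = N * I := by
    ext m
    rw [PowerSeries.coeff_mk]
    induction m with
    | zero =>
      rw [hco 0]
      have hsum : ∑ k ∈ Icc 1 d, (d.choose k : ℚ) * (d.choose (k - 1) : ℚ) *
          (if k - 1 ≤ 0 then ((2 * d + (0 - (k - 1))).choose (2 * d) : ℚ) else 0)
          = (d : ℚ) := by
        rw [Finset.sum_eq_single 1]
        · simp
        · intro k hk hk1
          rw [Finset.mem_Icc] at hk
          rw [if_neg (by omega), mul_zero]
        · intro h
          exact absurd (Finset.mem_Icc.mpr ⟨le_refl 1, hd⟩) h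
      rw [hsum, hq]
      simp [Nat.choose_one_right]
      field_simp
    | succ m ih =>
      have key := sum_rec d m hd
      have harec := a_rec d m
      have hm1 : ((m : ℚ) + 1) * ((m : ℚ) + 2) ≠ 0 := by positivity
      apply mul_left_cancel₀ hm1
      rw [hco (m + 1)]
      symm
      calc ((m : ℚ) + 1) * ((m : ℚ) + 2) * (q * ∑ k ∈ Icc 1 d,
            (d.choose k : ℚ) * (d.choose (k - 1) : ℚ) *
              (if k - 1 ≤ m + 1 then ((2 * d + (m + 1 - (k - 1))).choose (2 * d) : ℚ) else 0))
          = q * (((m : ℚ) + 1) * ((m : ℚ) + 2) * ∑ k ∈ Icc 1 d,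
            (d.choose k : ℚ) * (d.choose (k - 1) : ℚ) *
              (if k - 1 ≤ m + 1 then ((2 * d + (m + 1 - (k - 1))).choose (2 * d) : ℚ) else 0)) := by
            ring
        _ = q * (((d : ℚ) + m + 1) * ((d : ℚ) + m + 2) * ∑ k ∈ Icc 1 d,
            (d.choose k : ℚ) * (d.choose (k - 1) : ℚ) *
              (if k - 1 ≤ m then ((2 * d + (m - (k - 1))).choose (2 * d) : ℚ) else 0)) := by
            rw [key]
        _ = ((d : ℚ) + m + 1) * ((d : ℚ) + m + 2) * ((PowerSeries.coeff (R := ℚ) m) (N * I)) := by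
            rw [hco m]; ring
        _ = ((d : ℚ) + m + 1) * ((d : ℚ) + m + 2) *
              (((d + m).choose m : ℚ) * ((d + m + 1).choose (m + 1) : ℚ)) := by
            rw [ih]
        _ = ((m : ℚ) + 1) * ((m : ℚ) + 2) *
              (((d + (m + 1)).choose (m + 1) : ℚ) * ((d + (m + 1) + 1).choose (m + 1 + 1) : ℚ)) := by
            rw [harec]
  rw [hmk]
  calc (1 - PowerSeries.X : ℚ⟦X⟧) ^ (2 * d + 1) * (N * I)
      = N * (I * (1 - PowerSeries.X : ℚ⟦X⟧) ^ (2 * d + 1)) := by ring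
    _ = N := by rw [hIinv, mul_one]
end
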